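/- arXiv:1701.00928 — 8 statements merged into one kernel-verified Lean document; each statement's English description precedes it below -/
import Mathlib

section
/- A nonempty word w over a linearly ordered alphabet is a Lyndon word (i.e., w is lexicographically strictly smaller than every nontrivial rotation vu where w = uv with u, v nonempty) if and only if w has length 1 or w is lexicographically strictly smaller than every proper nonempty suffix of w. -/
open scoped Classical

/-- `k`-th power of a word: `x` repeated `k` times. -/
def listPow {α : Type*} (x : List α) (k : ℕ) : List α := (List.replicate k x).flatten

/-- A word is Lyndon if it is nonempty and lexicographically strictly smaller
than each of its proper nonempty suffixes. -/
def IsLyndon {α : Type*} [LinearOrder α] (w : List α) : Prop :=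
  w ≠ [] ∧ ∀ v : List α, v <:+ w → v ≠ [] → v ≠ w → List.Lex (· < ·) w v

/-- A word is primitive if it is nonempty and not a `k`-th power with `k ≥ 2`. -/
def Primitive' {α : Type*} (w : List α) : Prop :=
  w ≠ [] ∧ ∀ (x : List α) (k : ℕ), 2 ≤ k → w ≠ listPow x k

/-- A word is borderless if no nonempty strictly shorter word is both a prefix
and a suffix of it. -/
def Borderless {α : Type*} (w : List α) : Prop :=
  ∀ x : List α, x ≠ [] → x.length < w.length → ¬(x <+: w ∧ x <:+ w)
private lemma lexAR {α : Type*} {r : α → α → Prop} {s t : List α}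
    (h : List.Lex r s t) (u : List α) : List.Lex r s (t ++ u) := by
  induction h with
  | nil => exact List.Lex.nil
  | cons _ ih => exact List.Lex.cons ih
  | rel h => exact List.Lex.rel h

private lemma lexL {α : Type*} {r : α → α → Prop} {s t : List α}
    (h : List.Lex r s t) (hl : t.length ≤ s.length) (u : List α) :
    List.Lex r (s ++ u) t := by
  induction h with
  | nil => simp at hl
  | cons _ ih => exact List.Lex.cons (ih (by simpa using hl))
  | rel h => exact List.Lex.rel h

private lemma lexC {α : Type*} [LinearOrder α] : ∀ (v : List α) {s p : List α},
    List.Lex (· < ·) (v ++ s) (v ++ p) → List.Lex (· < ·) s p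
  | [], _, _, h => h
  | x :: v, s, p, h => by
    cases h with
    | cons h => exact lexC v h
    | rel h => exact absurd h (lt_irrefl x)

private lemma lexS {α : Type*} [LinearOrder α] : ∀ (a c b d : List α),
    a.length = c.length → List.Lex (· < ·) (a ++ b) (c ++ d) →
    List.Lex (· < ·) a c ∨ (a = c ∧ List.Lex (· < ·) b d)
  | [], [], b, d, _, h => Or.inr ⟨rfl, h⟩
  | [], _ :: _, _, _, hl, _ => by simp at hl
  | _ :: _, [], _, _, hl, _ => by simp at hl
  | x :: a, y :: c, b, d, hl, h => by
    cases h with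
    | rel h => exact Or.inl (List.Lex.rel h)
    | cons h =>
      rcases lexS a c b d (Nat.succ_injective hl) h with h' | ⟨rfl, h'⟩
      · exact Or.inl (List.Lex.cons h')
      · exact Or.inr ⟨rfl, h'⟩

private lemma lexAsymm {α : Type*} [LinearOrder α] {s t : List α}
    (h : List.Lex (· < ·) s t) : ¬ List.Lex (· < ·) t s := by
  induction h with
  | nil => intro h2; cases h2
  | cons _ ih =>
    intro h2
    cases h2 with
    | cons h2 => exact ih h2
    | rel h2 => exact lt_irrefl _ h2
  | rel h =>
    intro h2
    cases h2 with
    | cons h2 => exact lt_irrefl _ h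
    | rel h2 => exact absurd h2 (not_lt.2 h.le)

theorem lyndon_rotation_iff_suffix {α : Type*} [LinearOrder α] (w : List α) (hw : w ≠ []) :
    (∀ u v : List α, w = u ++ v → u ≠ [] → v ≠ [] → List.Lex (· < ·) w (v ++ u)) ↔
      (w.length = 1 ∨
        ∀ v : List α, v <:+ w → v ≠ [] → v ≠ w → List.Lex (· < ·) w v) := by
  constructor
  · intro H
    right
    intro v hsuf hv hvw
    obtain ⟨p, hp⟩ := hsuf
    have hp' : p ≠ [] := by
      rintro rfl; exact hvw (by simpa using hp)
    have hvlt : v.length < w.length := by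
      have h1 := congrArg List.length hp
      have h2 : 0 < p.length := List.length_pos_iff.mpr hp'
      simp at h1
      omega
    -- w = take |v| ++ drop |v|
    have hsplit : w = w.take v.length ++ w.drop v.length := (List.take_append_drop _ _).symm
    have hlen : (w.take v.length).length = v.length := by
      simp [Nat.min_eq_left hvlt.le]
    have hlex : List.Lex (· < ·) w (v ++ p) := H p v hp.symm hp' hv
    have := lexS (w.take v.length) v (w.drop v.length) p hlen (hsplit ▸ hlex)
    rcases this with h' | ⟨heq, _⟩
    · -- character difference within first |v| chars
      have : List.Lex (· < ·) (w.take v.length ++ w.drop v.length) v :=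
        lexL h' (by omega) _
      exact hsplit ▸ this
    · -- v is a prefix of w: border, contradiction
      exfalso
      -- w = v ++ s with s = drop
      set s := w.drop v.length with hs
      have hws : w = v ++ s := by rw [← heq]; exact hsplit
      have hs' : s ≠ [] := by
        intro h0
        have := congrArg List.length hws
        simp [h0] at this
        omega
      -- from w = p ++ v : Lex w (v ++ p) already have; cancel v
      have h1 : List.Lex (· < ·) s p := lexC v (by rw [← hws]; exact hlex)
      -- from w = v ++ s : Lex w (s ++ v)
      have h2 : List.Lex (· < ·) (p ++ v) (s ++ v) := by
        have := H v s hws hv hs'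
        rwa [← hp] at this
      have hlps : p.length = s.length := by
        have h3 := congrArg List.length hp
        have h4 := congrArg List.length hws
        simp at h3 h4
        omega
      rcases lexS p s v v hlps h2 with h' | ⟨rfl, h'⟩
      · exact lexAsymm h1 h'
      · exact lexAsymm h' h'
  · rintro (h1 | H) u v rfl hu hv
    · exfalso
      have := congrArg id h1
      simp at this
      rcases u with _ | ⟨a, u⟩
      · exact hu rfl
      · rcases v with _ | ⟨b, v⟩
        · exact hv rfl
        · simp [List.length_append] at h1
    · have hvw : v ≠ u ++ v := by
        intro h
        have := congrArg List.length h
        simp at this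
        exact hu (by simpa using this)
      exact lexAR (H v ⟨u, rfl⟩ hv hvw) u
end

section
/- The word w = a_1^{k_1} a_2^{k_2} ⋯ a_σ^{k_σ} (with each k_i ≥ 1 and Σ k_i = n), consisting of blocks of increasing letters, has exactly C(n+1, 2) − Σ_{i=1}^σ C(k_i+1, 2) + σ distinct Lyndon factors. -/
open scoped Classical

namespace BlockAux

open List

variable {α : Type*} [LinearOrder α]

lemma not_lex_of_prefix {l' l : List α} (h : l' <+: l) : ¬ List.Lex (· < ·) l l' := by
  induction l' generalizing l with
  | nil => intro hlex; cases hlex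
  | cons b t' ih =>
    intro hlex
    obtain ⟨c, hc⟩ := h
    subst hc
    cases hlex with
    | rel hab => exact lt_irrefl _ hab
    | cons h' => exact ih ⟨c, rfl⟩ h'

lemma lex_append_of_lex : ∀ {s s' : List α}, List.Lex (· < ·) s s' →
    s'.length ≤ s.length → ∀ x y : List α, List.Lex (· < ·) (s ++ x) (s' ++ y) := by
  intro s s' h
  induction h with
  | nil => intro hlen; simp at hlen
  | @rel a l₁ b l₂ hab => intro _ x y; exact List.Lex.rel hab
  | @cons a l₁ l₂ h ih =>
    intro hlen x y
    exact List.Lex.cons (ih (by simpa using hlen) x y)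

lemma lex_append_left {x y : List α} (h : List.Lex (· < ·) x y) (p : List α) :
    List.Lex (· < ·) (p ++ x) (p ++ y) := by
  induction p with
  | nil => simpa
  | cons a t ih => exact List.Lex.cons ih

lemma sorted_drop_prefix_or_lex {s : List α} (hs : s.Pairwise (· ≤ ·)) (m : ℕ) :
    s.drop m <+: s ∨ List.Lex (· < ·) s (s.drop m) := by
  induction s generalizing m with
  | nil => left; simp
  | cons a t ih =>
    cases m with
    | zero => left; exact prefix_rfl
    | succ m' =>
      have htail : t.Pairwise (· ≤ ·) := hs.of_cons
      rw [List.drop_succ_cons]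
      rcases hd : t.drop m' with _ | ⟨b, r⟩
      · left; exact List.nil_prefix
      · have hbmem : b ∈ t := by
          have : b ∈ t.drop m' := by rw [hd]; exact List.mem_cons_self
          exact List.mem_of_mem_drop this
        have hab : a ≤ b := List.rel_of_pairwise_cons hs hbmem
        rcases lt_or_eq_of_le hab with hlt | heq
        · right; exact List.Lex.rel hlt
        · have hr : r = t.drop (m' + 1) := by
            have h1 := congrArg (List.drop 1) hd
            rw [List.drop_drop] at h1
            simpa using h1.symm
          rcases ih htail (m' + 1) with hpre | hlex
          · left
            rw [← heq]
            exact List.cons_prefix_cons.mpr ⟨rfl, hr ▸ hpre⟩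
          · right
            rw [← heq]
            exact List.Lex.cons (hr ▸ hlex)

lemma isLyndon_append_replicate {s : List α} {c : α} {j : ℕ}
    (hs : s ≠ []) (hsort : s.Pairwise (· ≤ ·)) (hlt : ∀ x ∈ s, x < c) (hj : 1 ≤ j) :
    IsLyndon (s ++ List.replicate j c) := by
  constructor
  · simp [hs]
  intro v hv hvne hvwhole
  have hv' : v = (s ++ List.replicate j c).drop
      ((s ++ List.replicate j c).length - v.length) := List.suffix_iff_eq_drop.mp hv
  set m := (s ++ List.replicate j c).length - v.length with hmdef
  have hm1 : m ≠ 0 := by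
    intro h0
    exact hvwhole (by rw [hv', h0, List.drop_zero])
  by_cases hms : m < s.length
  · have hvdecomp : v = s.drop m ++ List.replicate j c := by
      rw [hv', List.drop_append_of_le_length (le_of_lt hms)]
    rcases sorted_drop_prefix_or_lex hsort m with hpre | hlex
    · obtain ⟨rest, hrest⟩ := hpre
      have hrestne : rest ≠ [] := by
        intro h
        rw [h, List.append_nil] at hrest
        have := congrArg List.length hrest
        simp [List.length_drop] at this
        omega
      have key : List.Lex (· < ·) (rest ++ List.replicate j c) (List.replicate j c) := by
        rcases rest with _ | ⟨e, rest'⟩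
        · exact absurd rfl hrestne
        cases j with
        | zero => omega
        | succ j' =>
          rw [List.replicate_succ]
          have he : e ∈ s := by
            rw [← hrest]; exact List.mem_append_right _ (List.mem_cons_self)
          exact List.Lex.rel (hlt e he)
      have key2 := lex_append_left key (s.drop m)
      rw [← List.append_assoc, hrest] at key2
      rw [hvdecomp]
      exact key2
    · rw [hvdecomp]
      exact lex_append_of_lex hlex (by simp) _ _
  · push_neg at hms
    have hvrep : v = List.replicate (j - (m - s.length)) c := by
      rw [hv', List.drop_append,
        List.drop_eq_nil_of_le hms, List.drop_replicate, List.nil_append]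
    rcases s with _ | ⟨e, s'⟩
    · exact absurd rfl hs
    rcases hjj : j - (m - (e :: s').length) with _ | jj
    · rw [hvrep, hjj] at hvne; simp at hvne
    · rw [hvrep, hjj, List.replicate_succ]
      exact List.Lex.rel (hlt e (List.mem_cons_self))

lemma isLyndon_singleton (c : α) : IsLyndon [c] := by
  refine ⟨by simp, ?_⟩
  intro v hv hne hvw
  rcases v with _ | ⟨a, t⟩
  · exact absurd rfl hne
  have hl := hv.length_le
  simp at hl
  subst hl
  obtain ⟨p, hp⟩ := hv
  rcases p with _ | ⟨b, p'⟩
  · simp at hp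
    exact absurd (by rw [hp]) hvw
  · have := congrArg List.length hp
    simp at this

lemma not_isLyndon_replicate (c : α) {j : ℕ} (hj : 2 ≤ j) :
    ¬ IsLyndon (List.replicate j c) := by
  obtain ⟨j', rfl⟩ : ∃ j', j = (j' + 1) + 1 := ⟨j - 2, by omega⟩
  rintro ⟨-, h⟩
  have h1 : List.replicate (j' + 1) c <:+ List.replicate ((j' + 1) + 1) c :=
    ⟨[c], by rw [List.replicate_succ]; rfl⟩
  have hne : List.replicate (j' + 1) c ≠ [] := by simp
  have hnw : List.replicate (j' + 1) c ≠ List.replicate ((j' + 1) + 1) c := by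
    intro he
    have := congrArg List.length he
    simp at this
  have hlex := h _ h1 hne hnw
  have hpre : List.replicate (j' + 1) c <+: List.replicate ((j' + 1) + 1) c :=
    ⟨[c], by simp [List.replicate_succ', List.append_assoc]⟩
  exact not_lex_of_prefix hpre hlex

lemma infix_append_cases {β : Type*} {v x y : List β} (h : v <:+: x ++ y) :
    v <:+: x ∨ v <:+: y ∨
      ∃ s t, s <:+ x ∧ s ≠ [] ∧ t <+: y ∧ t ≠ [] ∧ v = s ++ t := by
  obtain ⟨p, q, hpq⟩ := h
  rw [List.append_assoc] at hpq
  -- hpq : p ++ (v ++ q) = x ++ y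
  by_cases h1 : p.length + v.length ≤ x.length
  · left
    have hpre : p ++ v <+: x := by
      have hpre0 : p ++ v <+: x ++ y := ⟨q, by rw [List.append_assoc]; exact hpq⟩
      have heq := List.prefix_iff_eq_take.mp hpre0
      have hz : (p ++ v).length - x.length = 0 := by simp; omega
      rw [List.take_append, hz, List.take_zero, List.append_nil] at heq
      rw [heq]
      exact List.take_prefix _ _
    exact ((List.suffix_append p v).isInfix).trans hpre.isInfix
  · by_cases h2 : x.length ≤ p.length
    · right; left
      have hd := congrArg (List.drop x.length) hpq
      rw [List.drop_append, List.drop_left,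
        Nat.sub_eq_zero_of_le h2, List.drop_zero] at hd
      exact ⟨p.drop x.length, q, by rw [List.append_assoc]; exact hd⟩
    · right; right
      push_neg at h1 h2
      set d := x.length - p.length with hdd
      have hdv : d ≤ v.length := by omega
      refine ⟨v.take d, v.drop d, ?_, ?_, ?_, ?_, (List.take_append_drop d v).symm⟩
      · have ht := congrArg (List.take x.length) hpq
        rw [List.take_append, List.take_left,
          List.take_of_length_le h2.le, List.take_append,
          Nat.sub_eq_zero_of_le hdv, List.take_zero, List.append_nil] at ht
        exact ⟨p, ht⟩
      · intro h0
        have hlen : (v.take d).length = 0 := by rw [h0]; rfl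
        rw [List.length_take] at hlen
        omega
      · have hd := congrArg (List.drop x.length) hpq
        rw [List.drop_append, List.drop_left,
          List.drop_eq_nil_of_le h2.le, List.nil_append,
          List.drop_append,
          Nat.sub_eq_zero_of_le hdv, List.drop_zero] at hd
        exact ⟨q, hd⟩
      · intro h0
        have hlen : (v.drop d).length = 0 := by rw [h0]; rfl
        rw [List.length_drop] at hlen
        omega

lemma infix_replicate' {β : Type*} {v : List β} {m : ℕ} {c : β}
    (h : v <:+: List.replicate m c) : ∃ jj ≤ m, v = List.replicate jj c := by
  refine ⟨v.length, ?_, ?_⟩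
  · simpa using h.sublist.length_le
  · rw [List.eq_replicate_length]
    intro b hb
    exact List.eq_of_mem_replicate (h.sublist.subset hb)

lemma append_replicate_infix {β : Type*} {s x : List β} {c : β} (hs : s <:+ x)
    {jj m : ℕ} (hjm : jj ≤ m) :
    s ++ List.replicate jj c <:+: x ++ List.replicate m c := by
  obtain ⟨p, hp⟩ := hs
  refine ⟨p, List.replicate (m - jj) c, ?_⟩
  rw [List.append_assoc, List.append_assoc, ← List.replicate_add,
    Nat.add_sub_cancel' hjm, ← List.append_assoc, hp]

/-- The block word over alphabet ℕ. -/
def bw (k : ℕ → ℕ) : ℕ → List ℕ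
  | 0 => []
  | σ + 1 => bw k σ ++ List.replicate (k σ) σ

lemma bw_lt (k : ℕ → ℕ) : ∀ σ, ∀ x ∈ bw k σ, x < σ := by
  intro σ
  induction σ with
  | zero => intro x hx; simp [bw] at hx
  | succ σ ih =>
    intro x hx
    rw [bw, List.mem_append] at hx
    rcases hx with hx | hx
    · exact (ih x hx).trans (Nat.lt_succ_self σ)
    · rw [List.eq_of_mem_replicate hx]; exact Nat.lt_succ_self σ

lemma bw_not_mem (k : ℕ → ℕ) (σ : ℕ) : σ ∉ bw k σ :=
  fun h => lt_irrefl σ (bw_lt k σ σ h)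

lemma bw_sorted (k : ℕ → ℕ) : ∀ σ, (bw k σ).Pairwise (· ≤ ·) := by
  intro σ
  induction σ with
  | zero => simp [bw]
  | succ σ ih =>
    rw [bw, List.pairwise_append]
    refine ⟨ih, ?_, ?_⟩
    · exact List.pairwise_replicate.mpr (Or.inr le_rfl)
    · intro a ha b hb
      rw [List.eq_of_mem_replicate hb]
      exact (bw_lt k σ a ha).le

lemma bw_length (k : ℕ → ℕ) : ∀ σ, (bw k σ).length = ∑ q ∈ Finset.range σ, k q := by
  intro σ
  induction σ with
  | zero => simp [bw]
  | succ σ ih => rw [bw, List.length_append, ih, List.length_replicate,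
      Finset.sum_range_succ]

lemma mem_succ_iff (k : ℕ → ℕ) (hk : ∀ i, 1 ≤ k i) (σ : ℕ) (v : List ℕ) :
    (v <:+: bw k (σ + 1) ∧ IsLyndon v) ↔
      ((v <:+: bw k σ ∧ IsLyndon v) ∨
       (∃ p, p < (bw k σ).length ∧ ∃ j, j < k σ ∧
          v = (bw k σ).drop p ++ List.replicate (j + 1) σ) ∨ v = [σ]) := by
  constructor
  · rintro ⟨hinf, hlyn⟩
    rw [bw] at hinf
    rcases infix_append_cases hinf with h | h | ⟨s, t, hs, hsne, ht, htne, rfl⟩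
    · exact Or.inl ⟨h, hlyn⟩
    · obtain ⟨jj, hjm, rfl⟩ := infix_replicate' h
      right; right
      have hj1 : jj ≤ 1 := by
        by_contra hc
        exact not_isLyndon_replicate σ (by omega) hlyn
      interval_cases jj
      · exact absurd rfl hlyn.1
      · rfl
    · right; left
      obtain ⟨jj, hjle, rfl⟩ := infix_replicate' ht.isInfix
      have hjj1 : 1 ≤ jj := by
        rcases jj with _ | jj
        · exact absurd rfl htne
        · omega
      have hp := List.suffix_iff_eq_drop.mp hs
      have hslen : 1 ≤ s.length := List.length_pos_iff.mpr hsne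
      have hsle : s.length ≤ (bw k σ).length := hs.length_le
      refine ⟨(bw k σ).length - s.length, by omega, jj - 1, by omega, ?_⟩
      rw [← hp, show jj - 1 + 1 = jj by omega]
  · rintro (⟨hinf, hlyn⟩ | ⟨p, hp, j, hj, rfl⟩ | rfl)
    · exact ⟨hinf.trans (List.prefix_append _ _).isInfix, hlyn⟩
    · constructor
      · rw [bw]
        exact append_replicate_infix (List.drop_suffix p _) (by omega)
      · apply isLyndon_append_replicate
        · intro h0
          have hlen : ((bw k σ).drop p).length = 0 := by rw [h0]; rfl
          rw [List.length_drop] at hlen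
          omega
        · exact List.Pairwise.sublist (List.drop_sublist p _) (bw_sorted k σ)
        · intro x hx
          exact bw_lt k σ x (List.mem_of_mem_drop hx)
        · omega
    · constructor
      · rw [bw]
        have h1 : [σ] <+: List.replicate (k σ) σ := by
          refine ⟨List.replicate (k σ - 1) σ, ?_⟩
          have : [σ] ++ List.replicate (k σ - 1) σ = List.replicate (1 + (k σ - 1)) σ := by
            rw [List.replicate_add]; rfl
          rw [this, show 1 + (k σ - 1) = k σ by have := hk σ; omega]
        exact h1.isInfix.trans (List.suffix_append _ _).isInfix
      · exact isLyndon_singleton σ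

theorem core_count (k : ℕ → ℕ) (hk : ∀ i, 1 ≤ k i) (σ : ℕ) :
    {v : List ℕ | v <:+: bw k σ ∧ IsLyndon v}.ncard
      = σ + ∑ p ∈ Finset.range σ, (∑ q ∈ Finset.range p, k q) * k p := by
  induction σ with
  | zero =>
    have : {v : List ℕ | v <:+: bw k 0 ∧ IsLyndon v} = ∅ := by
      ext v
      simp only [Set.mem_setOf_eq, Set.mem_empty_iff_false, iff_false, not_and]
      intro h
      rw [show bw k 0 = [] from rfl] at h
      rw [List.infix_nil] at h
      intro hlyn
      exact hlyn.1 h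
    rw [this]
    simp
  | succ σ ih =>
    classical
    set u := bw k σ with hu
    set G : Finset (List ℕ) :=
      ((Finset.range u.length ×ˢ Finset.range (k σ)).image
        fun pj => u.drop pj.1 ++ List.replicate (pj.2 + 1) σ) ∪ {[σ]} with hG
    have hGmem : ∀ v : List ℕ, v ∈ G ↔
        ((∃ p, p < u.length ∧ ∃ j, j < k σ ∧
          v = u.drop p ++ List.replicate (j + 1) σ) ∨ v = [σ]) := by
      intro v
      rw [hG, Finset.mem_union, Finset.mem_image, Finset.mem_singleton]
      constructor
      · rintro (⟨⟨p, j⟩, hpj, hv⟩ | hv)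
        · rw [Finset.mem_product, Finset.mem_range, Finset.mem_range] at hpj
          exact Or.inl ⟨p, hpj.1, j, hpj.2, hv.symm⟩
        · exact Or.inr hv
      · rintro (⟨p, hp, j, hj, hv⟩ | hv)
        · exact Or.inl ⟨⟨p, j⟩, by
            rw [Finset.mem_product, Finset.mem_range, Finset.mem_range]
            exact ⟨hp, hj⟩, hv.symm⟩
        · exact Or.inr hv
    have hset : {v : List ℕ | v <:+: bw k (σ + 1) ∧ IsLyndon v}
        = {v : List ℕ | v <:+: u ∧ IsLyndon v} ∪ ↑G := by
      ext v
      rw [Set.mem_union, Set.mem_setOf_eq, Set.mem_setOf_eq, Finset.mem_coe,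
        hGmem v, mem_succ_iff k hk σ v]
    have hσnotin : ∀ v : List ℕ, v ∈ G → σ ∈ v := by
      intro v hv
      rw [hGmem v] at hv
      rcases hv with ⟨p, _, j, _, rfl⟩ | rfl
      · exact List.mem_append_right _ (List.mem_replicate.mpr ⟨by omega, rfl⟩)
      · exact List.mem_singleton_self σ
    have hdisj : Disjoint {v : List ℕ | v <:+: u ∧ IsLyndon v} (↑G : Set (List ℕ)) := by
      rw [Set.disjoint_left]
      rintro v ⟨hinf, -⟩ hvG
      exact bw_not_mem k σ (hinf.sublist.subset (hσnotin v hvG))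
    have hSfin : {v : List ℕ | v <:+: u ∧ IsLyndon v}.Finite := by
      apply Set.Finite.subset u.sublists.toFinset.finite_toSet
      intro v hv
      simp only [List.coe_toFinset, Set.mem_setOf_eq, List.mem_sublists]
      exact hv.1.sublist
    have hGcard : G.card = u.length * k σ + 1 := by
      rw [hG, Finset.card_union_of_disjoint, Finset.card_image_of_injOn,
        Finset.card_product, Finset.card_range, Finset.card_range,
        Finset.card_singleton]
      · rintro ⟨p, j⟩ hpj ⟨p', j'⟩ hpj' heq
        simp only [Finset.coe_product, Set.mem_prod, Finset.mem_coe,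
          Finset.mem_range] at hpj hpj'
        have hnot : ∀ pp, σ ∉ u.drop pp :=
          fun pp h => bw_not_mem k σ (List.mem_of_mem_drop h)
        have hcount := congrArg (List.count σ) heq
        rw [List.count_append, List.count_append,
          List.count_eq_zero.mpr (hnot p), List.count_eq_zero.mpr (hnot p'),
          List.count_replicate_self, List.count_replicate_self] at hcount
        have hlen := congrArg List.length heq
        simp only [List.length_append, List.length_drop,
          List.length_replicate] at hlen
        have h1 : j = j' := by omega
        have h2 : p = p' := by omega
        rw [h1, h2]
      · rw [Finset.disjoint_singleton_right, Finset.mem_image]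
        rintro ⟨⟨p, j⟩, hpj, heq⟩
        rw [Finset.mem_product, Finset.mem_range, Finset.mem_range] at hpj
        have := congrArg List.length heq
        simp only [List.length_append, List.length_drop,
          List.length_replicate, List.length_singleton] at this
        omega
    rw [hset, Set.ncard_union_eq hdisj hSfin G.finite_toSet, ih,
      Set.ncard_coe_finset, hGcard, bw_length, Finset.sum_range_succ]
    ring

lemma join_eq {β : Type*} (L : List (List β)) : L.flatten = L.flatten := rfl

lemma join_ofFn_nat (f : ℕ → ℕ) : ∀ σ : ℕ,
    (List.ofFn fun i : Fin σ => List.replicate (f i.val) (i.val)).flatten = bw f σ := by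
  intro σ
  induction σ with
  | zero => simp [bw]
  | succ σ ih =>
    rw [List.ofFn_succ', List.concat_eq_append, List.flatten_append, bw, ← ih]
    simp [Fin.coe_castSucc, Fin.val_last]

lemma map_lex {σ : ℕ} {l₁ l₂ : List (Fin σ)} (h : List.Lex (· < ·) l₁ l₂) :
    List.Lex (· < ·) (l₁.map Fin.val) (l₂.map Fin.val) := by
  induction h with
  | nil => exact List.Lex.nil
  | rel hr => exact List.Lex.rel (by exact_mod_cast hr)
  | cons _ ih => exact List.Lex.cons ih

lemma lex_of_map {σ : ℕ} : ∀ {x y : List ℕ}, List.Lex (· < ·) x y →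
    ∀ {l₁ l₂ : List (Fin σ)}, x = l₁.map Fin.val → y = l₂.map Fin.val →
      List.Lex (· < ·) l₁ l₂ := by
  intro x y h
  induction h with
  | nil =>
    intro l₁ l₂ h1 h2
    rcases l₁ with _ | ⟨a₁, t₁⟩
    · rcases l₂ with _ | ⟨a₂, t₂⟩
      · simp at h2
      · exact List.Lex.nil
    · simp at h1
  | @rel a la b lb hr =>
    intro l₁ l₂ h1 h2
    rcases l₁ with _ | ⟨a₁, t₁⟩
    · simp at h1
    rcases l₂ with _ | ⟨a₂, t₂⟩
    · simp at h2
    simp only [List.map_cons, List.cons.injEq] at h1 h2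
    refine List.Lex.rel ?_
    rw [Fin.lt_def, ← h1.1, ← h2.1]
    exact hr
  | @cons a la lb h ih =>
    intro l₁ l₂ h1 h2
    rcases l₁ with _ | ⟨a₁, t₁⟩
    · simp at h1
    rcases l₂ with _ | ⟨a₂, t₂⟩
    · simp at h2
    simp only [List.map_cons, List.cons.injEq] at h1 h2
    have hhead : a₁ = a₂ := Fin.val_injective (by rw [← h1.1, ← h2.1])
    rw [hhead]
    exact List.Lex.cons (ih h1.2 h2.2)

lemma isLyndon_map_val_iff {σ : ℕ} {v : List (Fin σ)} :
    IsLyndon (v.map Fin.val) ↔ IsLyndon v := by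
  have hinj : Function.Injective (List.map (Fin.val : Fin σ → ℕ)) :=
    List.map_injective_iff.mpr Fin.val_injective
  constructor
  · rintro ⟨h1, h2⟩
    refine ⟨by simpa using h1, ?_⟩
    intro t ht htne htv
    have hlex := h2 (t.map Fin.val) (List.IsSuffix.map Fin.val ht)
      (by simpa using htne) (fun he => htv (hinj he))
    exact lex_of_map hlex rfl rfl
  · rintro ⟨h1, h2⟩
    refine ⟨by simpa using h1, ?_⟩
    intro t ht htne htv
    obtain ⟨st, hst⟩ := ht
    obtain ⟨l₁, l₂, hv, hm1, hm2⟩ := List.map_eq_append_iff.mp hst.symm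
    subst hm2
    apply map_lex
    apply h2 l₂ ⟨l₁, hv.symm⟩
    · intro h0; rw [h0] at htne; exact htne rfl
    · intro h0; rw [h0] at htv; exact htv rfl

lemma infix_map_val {σ : ℕ} {v w : List (Fin σ)} :
    v.map Fin.val <:+: w.map Fin.val ↔ v <:+: w := by
  have hinj : Function.Injective (List.map (Fin.val : Fin σ → ℕ)) :=
    List.map_injective_iff.mpr Fin.val_injective
  constructor
  · rintro ⟨p, q, hpq⟩
    obtain ⟨w₁, w₂, hw, hm1, hm2⟩ := List.map_eq_append_iff.mp
      (show w.map Fin.val = (p ++ v.map Fin.val) ++ q from by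
        rw [← hpq])
    obtain ⟨a, b, hw1, hma, hmb⟩ := List.map_eq_append_iff.mp hm1
    have hbv : b = v := hinj hmb
    exact ⟨a, w₂, by rw [hw, hw1, hbv]⟩
  · exact fun h => List.IsInfix.map Fin.val h

lemma exists_lift {σ : ℕ} : ∀ (x : List ℕ), (∀ m ∈ x, m < σ) →
    ∃ v : List (Fin σ), v.map Fin.val = x := by
  intro x
  induction x with
  | nil => exact fun _ => ⟨[], rfl⟩
  | cons a t ih =>
    intro h
    obtain ⟨vt, hvt⟩ := ih (fun m hm => h m (List.mem_cons_of_mem a hm))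
    exact ⟨⟨a, h a (List.mem_cons_self)⟩ :: vt, by simp [hvt]⟩

lemma choose_two_cast (n : ℕ) : ((n + 1).choose 2 : ℤ) * 2 = n * (n + 1) := by
  induction n with
  | zero => simp
  | succ n ih =>
    have h := Nat.choose_succ_succ (n + 1) 1
    have h2 : ((n + 2).choose 2 : ℤ) = ((n + 1).choose 1 : ℤ) + ((n + 1).choose 2 : ℤ) := by
      exact_mod_cast congrArg (Nat.cast : ℕ → ℤ) h
    rw [show n + 1 + 1 = n + 2 by ring, h2, Nat.choose_one_right]
    push_cast
    nlinarith [ih]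

lemma sum_sq_identity (f : ℕ → ℕ) (σ : ℕ) :
    2 * (∑ p ∈ Finset.range σ, (∑ q ∈ Finset.range p, (f q : ℤ)) * (f p : ℤ))
      + ∑ p ∈ Finset.range σ, (f p : ℤ) ^ 2
      = (∑ p ∈ Finset.range σ, (f p : ℤ)) ^ 2 := by
  induction σ with
  | zero => simp
  | succ σ ih =>
    rw [Finset.sum_range_succ, Finset.sum_range_succ,
      Finset.sum_range_succ (f := fun p => (f p : ℤ))]
    ring_nf
    ring_nf at ih
    linarith

end BlockAux

theorem block_word_lyndon_count (σ n : ℕ) (k : Fin σ → ℕ)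
    (hk : ∀ i, 1 ≤ k i) (hsum : (∑ i, k i) = n) :
    (({v : List (Fin σ) | v <:+: (List.ofFn fun i : Fin σ => List.replicate (k i) i).flatten ∧
        IsLyndon v}.ncard : ℤ)) =
      ((n + 1).choose 2 : ℤ) - (∑ i, ((k i + 1).choose 2 : ℤ)) + (σ : ℤ) := by
  classical
  set k' : ℕ → ℕ := fun m => if h : m < σ then k ⟨m, h⟩ else 1 with hk'
  have hk'1 : ∀ i, 1 ≤ k' i := by
    intro i
    simp only [hk']
    split
    · exact hk _
    · exact le_rfl
  have hkk : ∀ i : Fin σ, k' i.val = k i := by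
    intro i
    simp only [hk']
    rw [dif_pos i.isLt]
  have hmap : ((List.ofFn fun i : Fin σ => List.replicate (k i) (i : Fin σ)).flatten).map Fin.val
      = BlockAux.bw k' σ := by
    rw [List.map_flatten, List.map_ofFn, ← BlockAux.join_ofFn_nat k' σ]
    refine congrArg List.flatten (congrArg List.ofFn (funext fun i => ?_))
    simp only [Function.comp_apply, List.map_replicate, hkk i]
  have hinj : Function.Injective (List.map (Fin.val : Fin σ → ℕ)) :=
    List.map_injective_iff.mpr Fin.val_injective
  have himg : (List.map (Fin.val : Fin σ → ℕ)) ''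
      {v : List (Fin σ) | v <:+:
        (List.ofFn fun i : Fin σ => List.replicate (k i) i).flatten ∧ IsLyndon v}
      = {v : List ℕ | v <:+: BlockAux.bw k' σ ∧ IsLyndon v} := by
    ext x
    constructor
    · rintro ⟨v, ⟨hinf, hlyn⟩, rfl⟩
      refine ⟨?_, BlockAux.isLyndon_map_val_iff.mpr hlyn⟩
      rw [← hmap]
      exact List.IsInfix.map Fin.val hinf
    · rintro ⟨hinf, hlyn⟩
      have hmemlt : ∀ m ∈ x, m < σ := fun m hm =>
        BlockAux.bw_lt k' σ m (hinf.sublist.subset hm)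
      obtain ⟨v, rfl⟩ := BlockAux.exists_lift x hmemlt
      refine ⟨v, ⟨?_, BlockAux.isLyndon_map_val_iff.mp hlyn⟩, rfl⟩
      rw [← hmap] at hinf
      exact BlockAux.infix_map_val.mp hinf
  have hncard : {v : List (Fin σ) | v <:+:
        (List.ofFn fun i : Fin σ => List.replicate (k i) i).flatten ∧ IsLyndon v}.ncard
      = {v : List ℕ | v <:+: BlockAux.bw k' σ ∧ IsLyndon v}.ncard := by
    rw [← himg, Set.ncard_image_of_injective _ hinj]
  rw [hncard, BlockAux.core_count k' hk'1 σ]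
  have hn : (∑ p ∈ Finset.range σ, (k' p : ℤ)) = (n : ℤ) := by
    rw [← Fin.sum_univ_eq_sum_range (fun p => (k' p : ℤ)) σ, ← hsum]
    push_cast
    exact Finset.sum_congr rfl (fun i _ => by rw [hkk i])
  have hchoose : (∑ i : Fin σ, ((k i + 1).choose 2 : ℤ))
      = ∑ p ∈ Finset.range σ, ((k' p + 1).choose 2 : ℤ) := by
    rw [← Fin.sum_univ_eq_sum_range (fun p => ((k' p + 1).choose 2 : ℤ)) σ]
    exact Finset.sum_congr rfl (fun i _ => by rw [hkk i])
  have hid := BlockAux.sum_sq_identity k' σ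
  rw [hn] at hid
  have hc1 := BlockAux.choose_two_cast n
  have hc2 : (∑ p ∈ Finset.range σ, ((k' p + 1).choose 2 : ℤ)) * 2
      = (∑ p ∈ Finset.range σ, (k' p : ℤ) ^ 2) + (n : ℤ) := by
    rw [Finset.sum_mul]
    rw [show (∑ p ∈ Finset.range σ, ((k' p + 1).choose 2 : ℤ) * 2)
        = ∑ p ∈ Finset.range σ, ((k' p : ℤ) ^ 2 + (k' p : ℤ)) from
      Finset.sum_congr rfl (fun p _ => by
        rw [BlockAux.choose_two_cast (k' p)]; ring)]
    rw [Finset.sum_add_distrib, hn]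
  rw [hchoose]
  push_cast
  have hP : (∑ p ∈ Finset.range σ, ((∑ q ∈ Finset.range p, (k' q : ℤ)) * (k' p : ℤ)))
      = ((∑ p ∈ Finset.range σ, (∑ q ∈ Finset.range p, k' q) * k' p : ℕ) : ℤ) := by
    push_cast
    rfl
  rw [← hP] at *
  nlinarith [hid, hc1, hc2]
end

section
/- The total number of Lyndon factor occurrences, summed over all words of length n over an alphabet of size σ, equals M(σ, n) = Σ_{m=1}^{n} ((n − m + 1)/m)·σ^{n−m}·Σ_{d | m} μ(m/d)·σ^d. -/
open scoped Classical

namespace LyndonAux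

variable {α : Type*}

theorem listPow_zero (x : List α) : listPow x 0 = [] := rfl

theorem listPow_succ (x : List α) (k : ℕ) : listPow x (k+1) = x ++ listPow x k := by
  simp [listPow, List.replicate_succ]

theorem listPow_one (x : List α) : listPow x 1 = x := by
  simp [listPow]

@[simp] theorem length_listPow (x : List α) (k : ℕ) :
    (listPow x k).length = k * x.length := by
  induction k with
  | zero => simp [listPow_zero]
  | succ k ih => simp [listPow_succ, ih]; ring

theorem listPow_nil (k : ℕ) : listPow ([] : List α) k = [] := by
  simp [listPow]

theorem listPow_add (x : List α) (a b : ℕ) :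
    listPow x (a+b) = listPow x a ++ listPow x b := by
  induction a with
  | zero => simp [listPow_zero]
  | succ a ih => rw [Nat.succ_add, listPow_succ, listPow_succ, ih, List.append_assoc]

theorem listPow_mul (x : List α) (a b : ℕ) :
    listPow (listPow x a) b = listPow x (b*a) := by
  induction b with
  | zero => simp [listPow_zero]
  | succ b ih => rw [listPow_succ, ih, Nat.succ_mul, Nat.add_comm, listPow_add]

theorem getElem_listPow (x : List α) (hx : x ≠ []) (k i : ℕ)
    (h : i < (listPow x k).length) :
    (listPow x k)[i] = x[i % x.length]'(Nat.mod_lt _ (List.length_pos_iff.2 hx)) := by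
  induction k generalizing i with
  | zero => simp [listPow_zero] at h
  | succ k ih =>
    simp only [listPow_succ]
    rcases lt_or_ge i x.length with hi | hi
    · rw [List.getElem_append_left hi]
      congr 1
      exact (Nat.mod_eq_of_lt hi).symm
    · have h' : i - x.length < (listPow x k).length := by
        simp only [listPow_succ, List.length_append, length_listPow] at h
        simp only [length_listPow]
        omega
      rw [List.getElem_append_right hi, ih _ h']
      congr 1
      exact (Nat.mod_eq_sub_mod hi).symm

end LyndonAux

namespace LyndonAux

variable {α : Type*} [Inhabited α]

/-- cyclic extension of a word to all of ℕ. -/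
def cyc (w : List α) (i : ℕ) : α := w.getD (i % w.length) default

theorem cyc_eq_getElem (w : List α) (i : ℕ) (h : i < w.length) : cyc w i = w[i] := by
  rw [cyc, Nat.mod_eq_of_lt h, List.getD_eq_getElem]

theorem cyc_eq_getElem_mod (w : List α) (hw : w ≠ []) (i : ℕ) :
    cyc w i = w[i % w.length]'(Nat.mod_lt _ (List.length_pos_iff.2 hw)) := by
  rw [cyc, List.getD_eq_getElem]

/-- `p` is a full period of `f : ℕ → α`. -/
def IsPer (f : ℕ → α) (p : ℕ) : Prop := ∀ i, f (i + p) = f i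

theorem isPer_mul {f : ℕ → α} {p : ℕ} (hf : IsPer f p) (t : ℕ) : ∀ i, f (i + t * p) = f i := by
  induction t with
  | zero => simp
  | succ t ih =>
    intro i
    have : i + (t+1) * p = (i + t * p) + p := by ring
    rw [this, hf, ih]

theorem isPer_sub {f : ℕ → α} {p q : ℕ} (hpq : p ≤ q) (hp : IsPer f p) (hq : IsPer f q) :
    IsPer f (q - p) := by
  intro i
  have : i + (q - p) + p = i + q := by omega
  calc f (i + (q - p)) = f (i + (q - p) + p) := (hp _).symm
    _ = f (i + q) := by rw [this]
    _ = f i := hq i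

theorem isPer_mod {f : ℕ → α} {p : ℕ} (hp0 : 0 < p) (hp : IsPer f p) :
    ∀ q, IsPer f q → IsPer f (q % p) := by
  intro q
  induction q using Nat.strong_induction_on with
  | _ q ih =>
    intro hq
    rcases lt_or_ge q p with h | h
    · rwa [Nat.mod_eq_of_lt h]
    · have h1 : q % p = (q - p) % p := (Nat.mod_eq_sub_mod h).symm ▸ rfl
      rw [Nat.mod_eq_sub_mod h]
      exact ih (q - p) (by omega) (isPer_sub h hp hq)

theorem isPer_gcd {f : ℕ → α} {p q : ℕ} (hp : IsPer f p) (hq : IsPer f q) :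
    IsPer f (Nat.gcd p q) := by
  induction p using Nat.strong_induction_on generalizing q with
  | _ p ih =>
    rcases Nat.eq_zero_or_pos p with rfl | hp0
    · rwa [Nat.gcd_zero_left]
    · rw [Nat.gcd_rec]
      exact ih (q % p) (Nat.mod_lt _ hp0) (isPer_mod hp0 hp q hq) hp

theorem eq_of_isPer {f : ℕ → α} {g : ℕ} (hg : 0 < g) (h : IsPer f g) (i : ℕ) :
    f i = f (i % g) := by
  induction i using Nat.strong_induction_on with
  | _ i ih =>
    rcases lt_or_ge i g with hi | hi
    · rw [Nat.mod_eq_of_lt hi]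
    · have : i = (i - g) + g := by omega
      rw [this, h, Nat.add_mod_right]
      exact ih _ (by omega)

theorem isPer_cyc_length (w : List α) : IsPer (cyc w) w.length := by
  intro i
  simp [cyc, Nat.add_mod_right]

theorem cyc_listPow (x : List α) (hx : x ≠ []) (k : ℕ) (hk : 0 < k) (i : ℕ) :
    cyc (listPow x k) i = x[i % x.length]'(Nat.mod_lt _ (List.length_pos_iff.2 hx)) := by
  have hw : (listPow x k) ≠ [] := by
    have : 0 < (listPow x k).length := by
      rw [length_listPow]
      exact Nat.mul_pos hk (List.length_pos_iff.2 hx)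
    exact List.ne_nil_of_length_pos this
  rw [cyc_eq_getElem_mod _ hw, getElem_listPow x hx]
  congr 1
  rw [length_listPow]
  exact Nat.mod_mod_of_dvd i ⟨k, by ring⟩

theorem isPer_cyc_of_pow (x : List α) (hx : x ≠ []) (k : ℕ) (hk : 0 < k) :
    IsPer (cyc (listPow x k)) x.length := by
  intro i
  rw [cyc_listPow x hx k hk, cyc_listPow x hx k hk]
  congr 1
  rw [Nat.add_mod_right]

theorem pow_of_isPer (w : List α) (hw : w ≠ []) {g : ℕ} (hg : 0 < g)
    (hdvd : g ∣ w.length) (h : IsPer (cyc w) g) :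
    w = listPow (w.take g) (w.length / g) := by
  have hm : 0 < w.length := List.length_pos_iff.2 hw
  have hgm : g ≤ w.length := Nat.le_of_dvd hm hdvd
  have htl : (w.take g).length = g := by simp [Nat.min_eq_left hgm]
  have htn : w.take g ≠ [] := by
    apply List.ne_nil_of_length_pos; omega
  apply List.ext_getElem
  · rw [length_listPow, htl, Nat.div_mul_cancel hdvd]
  · intro i h1 h2
    rw [getElem_listPow _ htn]
    have him : i % (w.take g).length < g := by rw [htl]; exact Nat.mod_lt _ hg
    have hig : i % (w.take g).length = i % g := by rw [htl]
    have : (w.take g)[i % (w.take g).length]'(by omega) = w[i % g]'(by omega) := by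
      simp only [List.getElem_take]
      congr 1
    rw [this]
    calc w[i] = cyc w i := (cyc_eq_getElem w i h1).symm
      _ = cyc w (i % g) := eq_of_isPer hg h i
      _ = w[i % g]'(by omega) := cyc_eq_getElem w _ (by omega)

theorem period_eq_length_of_primitive {w : List α} (hw : Primitive' w) {g : ℕ}
    (hdvd : g ∣ w.length) (h : IsPer (cyc w) g) : g = w.length := by
  have hm : 0 < w.length := List.length_pos_iff.2 hw.1
  have hg : 0 < g := by
    rcases Nat.eq_zero_or_pos g with rfl | h'
    · exact absurd (Nat.eq_zero_of_zero_dvd hdvd) (by omega)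
    · exact h'
  have hpow := pow_of_isPer w hw.1 hg hdvd h
  have hgm : g ≤ w.length := Nat.le_of_dvd hm hdvd
  have h1 : 1 ≤ w.length / g := Nat.one_le_div_iff hg |>.2 hgm
  rcases Nat.lt_or_ge (w.length / g) 2 with h2 | h2
  · have h3 : w.length / g = 1 := by omega
    have h4 := Nat.div_mul_cancel hdvd
    rw [h3, one_mul] at h4
    exact h4
  · exact absurd hpow (hw.2 _ _ h2)

end LyndonAux

namespace LyndonAux

set_option linter.unusedSectionVars false

variable {α : Type*} [Inhabited α]

theorem exists_primitive_root : ∀ (N : ℕ) (w : List α), w.length ≤ N → w ≠ [] →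
    ∃ x k, Primitive' x ∧ 1 ≤ k ∧ w = listPow x k := by
  intro N
  induction N using Nat.strong_induction_on with
  | _ N ih =>
    intro w hN hw
    by_cases hp : Primitive' w
    · exact ⟨w, 1, hp, le_refl 1, (listPow_one w).symm⟩
    · rw [Primitive'] at hp
      push_neg at hp
      obtain ⟨x, k, hk2, hwx⟩ := hp hw
      have hx : x ≠ [] := by
        rintro rfl
        rw [listPow_nil] at hwx
        exact hw hwx
      have hxlen : 0 < x.length := List.length_pos_iff.2 hx
      have hwlen : w.length = k * x.length := by rw [hwx, length_listPow]
      have hlt : x.length < N := by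
        have : x.length < w.length := by
          rw [hwlen]; nlinarith
        omega
      obtain ⟨z, l, hz, hl, hxz⟩ := ih x.length hlt x (le_refl _) hx
      refine ⟨z, k * l, hz, Nat.mul_pos (by omega) hl, ?_⟩
      rw [hwx, hxz, listPow_mul]

theorem getElem_congr_list {l l' : List α} (h : l = l') {i : ℕ} (h' : i < l.length) :
    l[i] = l'[i]'(h ▸ h') := by subst h; rfl

theorem isPer_cyc_factor {w u : List α} (hun : u ≠ []) {c : ℕ} (hc : 1 ≤ c)
    (hw : w = listPow u c) {g : ℕ} (hg : 0 < g) (hgu : g ∣ u.length)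
    (hper : IsPer (cyc w) g) : IsPer (cyc u) g := by
  have hup : 0 < u.length := List.length_pos_iff.2 hun
  have hwl : w.length = c * u.length := by rw [hw, length_listPow]
  have hwn : w ≠ [] := by
    apply List.ne_nil_of_length_pos; rw [hwl]; exact Nat.mul_pos hc hup
  have hle : u.length ≤ w.length := by rw [hwl]; nlinarith
  have hval : ∀ i : ℕ, cyc u i = cyc w (i % u.length) := by
    intro i
    have h1 : i % u.length < u.length := Nat.mod_lt _ hup
    rw [cyc_eq_getElem_mod u hun, cyc_eq_getElem w _ (lt_of_lt_of_le h1 hle),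
      getElem_congr_list hw, getElem_listPow u hun]
    congr 1
    exact (Nat.mod_eq_of_lt h1).symm
  intro i
  rw [hval, hval]
  rw [eq_of_isPer hg hper ((i+g) % u.length), eq_of_isPer hg hper (i % u.length)]
  congr 1
  rw [Nat.mod_mod_of_dvd _ hgu, Nat.mod_mod_of_dvd _ hgu, Nat.add_mod_right]

theorem getElem_root {x : List α} (hx : x ≠ []) {j : ℕ} (i : ℕ) (hi : i < x.length)
    (hij : i < (listPow x j).length) : (listPow x j)[i] = x[i] := by
  rw [getElem_listPow x hx j i hij]
  congr 1
  exact Nat.mod_eq_of_lt hi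

theorem primitive_root_unique {x y : List α} {j k : ℕ} (hx : Primitive' x) (hy : Primitive' y)
    (hj : 1 ≤ j) (hk : 1 ≤ k) (h : listPow x j = listPow y k) : x = y ∧ j = k := by
  have hxn := hx.1
  have hyn := hy.1
  have hp : 0 < x.length := List.length_pos_iff.2 hxn
  have hq : 0 < y.length := List.length_pos_iff.2 hyn
  have hperp : IsPer (cyc (listPow x j)) x.length := isPer_cyc_of_pow x hxn j hj
  have hperq : IsPer (cyc (listPow x j)) y.length := by
    rw [h]; exact isPer_cyc_of_pow y hyn k hk
  have hg0 : 0 < Nat.gcd x.length y.length := Nat.gcd_pos_of_pos_left _ hp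
  have hperg : IsPer (cyc (listPow x j)) (Nat.gcd x.length y.length) := isPer_gcd hperp hperq
  have hgx : Nat.gcd x.length y.length = x.length :=
    period_eq_length_of_primitive hx (Nat.gcd_dvd_left _ _)
      (isPer_cyc_factor hxn hj rfl hg0 (Nat.gcd_dvd_left _ _) hperg)
  have hgy : Nat.gcd x.length y.length = y.length :=
    period_eq_length_of_primitive hy (Nat.gcd_dvd_right _ _)
      (isPer_cyc_factor hyn hk h hg0 (Nat.gcd_dvd_right _ _) hperg)
  have hpq : x.length = y.length := by omega
  have hxy : x = y := by
    apply List.ext_getElem hpq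
    intro i h1 h2
    have hi : i < (listPow x j).length := by
      rw [length_listPow]; nlinarith
    have hi' : i < (listPow y k).length := by rw [← h]; exact hi
    rw [← getElem_root hxn i h1 hi, ← getElem_root hyn i h2 hi']
    exact getElem_congr_list h hi
  refine ⟨hxy, ?_⟩
  have hlen : j * x.length = k * y.length := by
    rw [← length_listPow, ← length_listPow, h]
  rw [← hxy] at hlen
  exact Nat.eq_of_mul_eq_mul_right hp hlen

end LyndonAux

namespace LyndonAux

set_option linter.unusedSectionVars false

variable {α : Type*} [Inhabited α]

theorem cyc_rotate (w : List α) (hw : w ≠ []) (k i : ℕ) :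
    cyc (w.rotate k) i = cyc w (i + k) := by
  have hm : 0 < w.length := List.length_pos_iff.2 hw
  have hrl : (w.rotate k).length = w.length := List.length_rotate w k
  have hrn : w.rotate k ≠ [] := by
    apply List.ne_nil_of_length_pos; omega
  rw [cyc_eq_getElem_mod _ hrn, cyc_eq_getElem_mod _ hw]
  rw [List.getElem_rotate]
  congr 1
  rw [hrl]
  rw [Nat.mod_add_mod]

theorem isPer_cyc_of_rotate {w : List α} (hw : w ≠ []) {k p : ℕ}
    (h : IsPer (cyc (w.rotate k)) p) : IsPer (cyc w) p := by
  have hm : 0 < w.length := List.length_pos_iff.2 hw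
  have key : ∀ j, cyc w (j + k + p) = cyc w (j + k) := by
    intro j
    have : j + k + p = j + p + k := by ring
    rw [this, ← cyc_rotate w hw k (j + p), ← cyc_rotate w hw k j]
    exact h j
  intro i
  have hper_m : IsPer (cyc w) w.length := isPer_cyc_length w
  have hkm : k ≤ k * w.length + i := by nlinarith
  have e1 : cyc w (i + p) = cyc w (i + p + k * w.length) := (isPer_mul hper_m k (i+p)).symm
  have e2 : cyc w i = cyc w (i + k * w.length) := (isPer_mul hper_m k i).symm
  rw [e1, e2]
  have h3 : i + k * w.length = (k * w.length + i - k) + k := by omega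
  have h4 : i + p + k * w.length = (k * w.length + i - k) + k + p := by omega
  rw [h3, h4]
  exact key _

theorem primitive_rotate {w : List α} (hw : Primitive' w) (k : ℕ) :
    Primitive' (w.rotate k) := by
  have hm : 0 < w.length := List.length_pos_iff.2 hw.1
  have hrl : (w.rotate k).length = w.length := List.length_rotate w k
  refine ⟨by apply List.ne_nil_of_length_pos; omega, ?_⟩
  rintro x t ht2 hrot
  have hx : x ≠ [] := by
    rintro rfl
    rw [listPow_nil] at hrot
    have := hrl
    rw [hrot] at this
    simp at this
    omega
  have hxp : 0 < x.length := List.length_pos_iff.2 hx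
  have hdvd : x.length ∣ w.length := by
    rw [← hrl, hrot, length_listPow]; exact ⟨t, by ring⟩
  have hlt : x.length < w.length := by
    have : w.length = t * x.length := by rw [← hrl, hrot, length_listPow]
    nlinarith
  have hper : IsPer (cyc (w.rotate k)) x.length := by
    rw [hrot]; exact isPer_cyc_of_pow x hx t (by omega)
  have := period_eq_length_of_primitive hw hdvd (isPer_cyc_of_rotate hw.1 hper)
  omega

theorem rotate_eq_self {w : List α} (hw : Primitive' w) {k : ℕ} (h : w.rotate k = w) :
    w.length ∣ k := by
  have hwn := hw.1
  have hm : 0 < w.length := List.length_pos_iff.2 hwn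
  have hper : IsPer (cyc w) k := by
    intro i
    calc cyc w (i + k) = cyc (w.rotate k) i := (cyc_rotate w hwn k i).symm
      _ = cyc w i := by rw [h]
  have hperm : IsPer (cyc w) w.length := isPer_cyc_length w
  have hg : IsPer (cyc w) (Nat.gcd k w.length) := isPer_gcd hper hperm
  have := period_eq_length_of_primitive hw (Nat.gcd_dvd_right _ _) hg
  rw [← this]
  exact Nat.gcd_dvd_left _ _

theorem rotate_inj {w : List α} (hw : Primitive' w) {i j : ℕ} (hi : i < w.length)
    (hj : j < w.length) (h : w.rotate i = w.rotate j) : i = j := by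
  have key : ∀ {a b : ℕ}, a ≤ b → b < w.length → w.rotate a = w.rotate b → a = b := by
    intro a b hab hb hrot
    have h1 : (w.rotate a).rotate (w.length - b) = w.rotate (a + (w.length - b)) :=
      List.rotate_rotate w a (w.length - b)
    have h2 : (w.rotate b).rotate (w.length - b) = w := by
      rw [List.rotate_rotate]
      have : b + (w.length - b) = w.length := by omega
      rw [this, List.rotate_length]
    have h3 : w.rotate (a + (w.length - b)) = w := by rw [← h1, hrot, h2]
    have h4 := rotate_eq_self hw h3
    have h5 : 0 < a + (w.length - b) := by omega
    have h6 : a + (w.length - b) ≤ w.length := by omega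
    have h7 : a + (w.length - b) = w.length := by
      rcases h4 with ⟨c, hc⟩
      rcases Nat.eq_zero_or_pos c with rfl | hc0
      · omega
      · nlinarith
    omega
  rcases le_total i j with hij | hij
  · exact key hij hj h
  · exact (key hij hi h.symm).symm

end LyndonAux

namespace LyndonAux

set_option linter.unusedSectionVars false

variable {α : Type*} [LinearOrder α]

theorem lex_of_prefix : ∀ {u v : List α}, u <+: v → u ≠ v → List.Lex (· < ·) u v := by
  intro u
  induction u with
  | nil =>
    intro v _ hne
    cases v with
    | nil => exact absurd rfl hne
    | cons b t => exact List.Lex.nil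
  | cons a t ih =>
    intro v hp hne
    obtain ⟨s, hs⟩ := hp
    cases v with
    | nil => simp at hs
    | cons b t' =>
      rw [List.cons_append] at hs
      injection hs with h1 h2
      subst h1
      exact List.Lex.cons (ih ⟨s, h2⟩ (by rintro rfl; exact hne (by rw [← h2])))

theorem lex_append_not_prefix : ∀ {a b : List α}, List.Lex (· < ·) a b → ¬ a <+: b →
    ∀ (c d : List α), List.Lex (· < ·) (a ++ c) (b ++ d) := by
  intro a b h
  induction h with
  | nil =>
    intro hp _ _
    exact absurd (List.nil_prefix) hp
  | @rel a₁ l₁ a₂ l₂ h =>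
    intro _ c d
    exact List.Lex.rel h
  | @cons a l₁ l₂ h ih =>
    intro hp c d
    refine List.Lex.cons (ih ?_ c d)
    intro hpre
    obtain ⟨t, ht⟩ := hpre
    exact hp ⟨t, by rw [List.cons_append, ht]⟩

theorem lex_append_of_length_le {a b : List α} (h : List.Lex (· < ·) a b)
    (hl : b.length ≤ a.length) (c d : List α) : List.Lex (· < ·) (a ++ c) (b ++ d) := by
  apply lex_append_not_prefix h _ c d
  intro hp
  have := hp.eq_of_length (le_antisymm hp.length_le hl)
  subst this
  exact asymm_of (List.Lex (· < ·)) h h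

theorem lex_cancel_left : ∀ (c : List α) {a b : List α},
    List.Lex (· < ·) (c ++ a) (c ++ b) → List.Lex (· < ·) a b := by
  intro c
  induction c with
  | nil => intro a b h; exact h
  | cons x t ih =>
    intro a b h
    rw [List.cons_append, List.cons_append] at h
    cases h with
    | cons h => exact ih h
    | rel h => exact absurd h (lt_irrefl x)

theorem lyndon_primitive {w : List α} (hw : IsLyndon w) : Primitive' w := by
  refine ⟨hw.1, ?_⟩
  rintro x k hk2 rfl
  have hx : x ≠ [] := by
    rintro rfl
    rw [listPow_nil] at hw
    exact hw.1 rfl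
  have hxp : 0 < x.length := List.length_pos_iff.2 hx
  have h1 : listPow x k = x ++ listPow x (k-1) := by
    conv_lhs => rw [show k = 1 + (k-1) by omega]
    rw [listPow_add, listPow_one]
  have h2 : listPow x k = listPow x (k-1) ++ x := by
    conv_lhs => rw [show k = (k-1) + 1 by omega]
    rw [listPow_add, listPow_one]
  have hsuf : listPow x (k-1) <:+ listPow x k := ⟨x, h1.symm⟩
  have hlen : (listPow x (k-1)).length < (listPow x k).length := by
    rw [length_listPow, length_listPow]
    have : k - 1 < k := by omega
    exact (Nat.mul_lt_mul_right hxp).2 this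
  have hne : listPow x (k-1) ≠ [] := by
    apply List.ne_nil_of_length_pos
    rw [length_listPow]
    have : 1 ≤ k - 1 := by omega
    nlinarith
  have hnew : listPow x (k-1) ≠ listPow x k := by
    intro h; rw [h] at hlen; omega
  have hlex := hw.2 _ hsuf hne hnew
  have hpre : listPow x (k-1) <+: listPow x k := by rw [h2]; exact ⟨x, rfl⟩
  have hlex2 := lex_of_prefix hpre hnew
  exact asymm_of (List.Lex (· < ·)) hlex hlex2

theorem lyndon_lex_rotate {w : List α} (hw : IsLyndon w) {k : ℕ} (hk : 0 < k)
    (hk2 : k < w.length) : List.Lex (· < ·) w (w.rotate k) := by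
  rw [List.rotate_eq_drop_append_take (le_of_lt hk2)]
  have hsuf : w.drop k <:+ w := List.drop_suffix k w
  have hlen : (w.drop k).length = w.length - k := List.length_drop
  have hne : w.drop k ≠ [] := by
    apply List.ne_nil_of_length_pos; omega
  have hnew : w.drop k ≠ w := by
    intro h
    have := congrArg List.length h
    omega
  have hlex := hw.2 _ hsuf hne hnew
  have := lex_append_of_length_le hlex (by omega) [] (w.take k)
  rwa [List.append_nil] at this

theorem lyndon_rotation_unique {α : Type*} [LinearOrder α] {L L' : List α}
    (hL : IsLyndon L) (hL' : IsLyndon L') {k : ℕ} (h : L' = L.rotate k) : L' = L := by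
  by_contra hne
  have hLn := hL.1
  have hm : 0 < L.length := List.length_pos_iff.2 hLn
  have h1 : L.rotate (k % L.length) = L' := by rw [List.rotate_mod]; exact h.symm
  have hk'lt : k % L.length < L.length := Nat.mod_lt _ hm
  have hk'0 : k % L.length ≠ 0 := by
    intro h0
    rw [h0, List.rotate_zero] at h1
    exact hne h1.symm
  have hlex1 : List.Lex (· < ·) L L' := by
    rw [← h1]; exact lyndon_lex_rotate hL (by omega) hk'lt
  have hL'len : L'.length = L.length := by rw [h]; exact List.length_rotate L k
  have h2 : L'.rotate (L.length - k % L.length) = L := by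
    rw [← h1, List.rotate_rotate, show k % L.length + (L.length - k % L.length) = L.length by omega,
      List.rotate_length]
  have hlex2 : List.Lex (· < ·) L' L := by
    rw [← h2]
    exact lyndon_lex_rotate hL' (by omega) (by omega)
  exact asymm_of (List.Lex (· < ·)) hlex1 hlex2

theorem exists_lyndon_rotation {α : Type*} [LinearOrder α] [Inhabited α] {w : List α}
    (hw : Primitive' w) :
    ∃ L j, IsLyndon L ∧ j < w.length ∧ w = L.rotate j ∧ L.length = w.length := by
  classical
  have hwn := hw.1
  have hm : 0 < w.length := List.length_pos_iff.2 hwn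
  set S : Finset (List α) := (Finset.range w.length).image (fun i => w.rotate i) with hS
  have hSne : S.Nonempty := ⟨w.rotate 0, Finset.mem_image.2 ⟨0, Finset.mem_range.2 hm, rfl⟩⟩
  set r := S.min' hSne with hr
  obtain ⟨i₀, hi₀, hri⟩ := Finset.mem_image.1 (S.min'_mem hSne)
  rw [Finset.mem_range] at hi₀
  rw [← hr] at hri
  have hrlen : r.length = w.length := by rw [← hri]; exact List.length_rotate w i₀
  have hrprim : Primitive' r := by rw [← hri]; exact primitive_rotate hw i₀
  have hrn : r ≠ [] := hrprim.1
  have hmin : ∀ k, 0 < k → k < w.length → List.Lex (· < ·) r (r.rotate k) := by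
    intro k hk0 hk
    have hmem : r.rotate k ∈ S := by
      rw [← hri, List.rotate_rotate]
      refine Finset.mem_image.2 ⟨(i₀ + k) % w.length, Finset.mem_range.2 (Nat.mod_lt _ hm), ?_⟩
      rw [List.rotate_mod]
    have hle : r ≤ r.rotate k := Finset.min'_le S _ hmem
    have hne : r ≠ r.rotate k := by
      intro hcontra
      have hdvd := rotate_eq_self hrprim hcontra.symm
      rw [hrlen] at hdvd
      have := Nat.le_of_dvd hk0 hdvd
      omega
    exact lt_of_le_of_ne hle hne
  have hrlyndon : IsLyndon r := by
    refine ⟨hrn, ?_⟩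
    intro v hsuf hvne hvner
    obtain ⟨u, huv⟩ := hsuf
    have hun : u ≠ [] := by
      rintro rfl
      rw [List.nil_append] at huv
      exact hvner huv
    have hulen : 0 < u.length := List.length_pos_iff.2 hun
    have hvlen : 0 < v.length := List.length_pos_iff.2 hvne
    have hsum : u.length + v.length = w.length := by
      rw [← hrlen, ← huv, List.length_append]
    have hrot : r.rotate u.length = v ++ u := by
      rw [← huv, List.rotate_eq_drop_append_take (by rw [List.length_append]; omega),
        List.drop_left, List.take_left]
    have hlex_ru : List.Lex (· < ·) r (v ++ u) := by
      rw [← hrot]; exact hmin u.length hulen (by omega)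
    by_contra hnot
    rcases lt_trichotomy v r with hvr | heq | hrv
    · by_cases hpre : v <+: r
      · obtain ⟨t, htv⟩ := hpre
        have htlen : t.length = u.length := by
          have := congrArg List.length htv
          rw [List.length_append] at this
          omega
        have htu : List.Lex (· < ·) t u := by
          apply lex_cancel_left v
          rw [htv]
          exact hlex_ru
        have hrot2 : r.rotate v.length = t ++ v := by
          rw [← htv, List.rotate_eq_drop_append_take (by rw [List.length_append]; omega),
            List.drop_left, List.take_left]
        have h2 : List.Lex (· < ·) r (t ++ v) := by
          rw [← hrot2]; exact hmin v.length hvlen (by omega)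
        have h3 : List.Lex (· < ·) (t ++ v) (u ++ v) := by
          exact lex_append_of_length_le htu (by omega) v v
        rw [huv] at h3
        exact asymm_of (List.Lex (· < ·)) h2 h3
      · have h3 := lex_append_not_prefix hvr hpre u []
        rw [List.append_nil] at h3
        exact asymm_of (List.Lex (· < ·)) hlex_ru h3
    · exact hvner heq
    · exact hnot hrv
  refine ⟨r, (w.length - i₀) % w.length, hrlyndon, Nat.mod_lt _ hm, ?_, hrlen⟩
  have : r.rotate ((w.length - i₀) % w.length) = r.rotate (w.length - i₀) := by
    have h5 := List.rotate_mod r (w.length - i₀)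
    rw [hrlen] at h5
    exact h5
  rw [this, ← hri, List.rotate_rotate, show i₀ + (w.length - i₀) = w.length by omega,
    List.rotate_length]

end LyndonAux

namespace LyndonAux

open Finset

variable {σ : ℕ}

def funOfList {σ m : ℕ} (l : List (Fin σ)) (h : l.length = m) : Fin m → Fin σ :=
  fun j => l[(j : ℕ)]'(by omega)

theorem ofFn_funOfList {σ m : ℕ} (l : List (Fin σ)) (h : l.length = m) :
    List.ofFn (funOfList l h) = l := by
  apply List.ext_getElem (by simp [h])
  intro i h1 h2
  simp [funOfList]

theorem funOfList_ofFn {σ m : ℕ} (v : Fin m → Fin σ) (h : (List.ofFn v).length = m) :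
    funOfList (List.ofFn v) h = v := by
  apply List.ofFn_injective
  rw [ofFn_funOfList]

noncomputable def lynCount (σ m : ℕ) : ℕ :=
  ((Finset.univ : Finset (Fin m → Fin σ)).filter (fun v => IsLyndon (List.ofFn v))).card

noncomputable def primCount (σ m : ℕ) : ℕ :=
  ((Finset.univ : Finset (Fin m → Fin σ)).filter (fun v => Primitive' (List.ofFn v))).card

noncomputable def primRoot {α : Type*} [Inhabited α] (w : List α) : List α :=
  if hw : w = [] then [] else (exists_primitive_root w.length w le_rfl hw).choose

theorem primRoot_spec {α : Type*} [Inhabited α] (w : List α) (hw : w ≠ []) :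
    Primitive' (primRoot w) ∧ ∃ k, 1 ≤ k ∧ w = listPow (primRoot w) k := by
  rw [primRoot, dif_neg hw]
  obtain ⟨k, hk⟩ := (exists_primitive_root w.length w le_rfl hw).choose_spec
  exact ⟨hk.1, k, hk.2.1, hk.2.2⟩

theorem primCount_eq_mul (σ m : ℕ) (hσ : 1 ≤ σ) (hm : 1 ≤ m) :
    primCount σ m = m * lynCount σ m := by
  classical
  haveI : Inhabited (Fin σ) := ⟨⟨0, by omega⟩⟩
  have hcard : ((Finset.univ : Finset (Fin m)) ×ˢ
      ((Finset.univ : Finset (Fin m → Fin σ)).filter (fun v => IsLyndon (List.ofFn v)))).card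
      = m * lynCount σ m := by
    rw [Finset.card_product, Finset.card_univ, Fintype.card_fin, lynCount]
  rw [← hcard, primCount]
  symm
  apply Finset.card_bij (fun p _ => funOfList ((List.ofFn p.2).rotate (p.1 : ℕ)) (by simp))
  · rintro ⟨a, v⟩ ha
    simp only [Finset.mem_product, Finset.mem_filter, Finset.mem_univ, true_and] at ha ⊢
    rw [ofFn_funOfList]
    exact primitive_rotate (lyndon_primitive ha) a
  · rintro ⟨a₁, v₁⟩ h₁ ⟨a₂, v₂⟩ h₂ heq
    simp only [Finset.mem_product, Finset.mem_filter, Finset.mem_univ, true_and] at h₁ h₂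
    have heq' : (List.ofFn v₁).rotate (a₁ : ℕ) = (List.ofFn v₂).rotate (a₂ : ℕ) := by
      have := congrArg List.ofFn heq
      rwa [ofFn_funOfList, ofFn_funOfList] at this
    have h2 : (List.ofFn v₂) = ((List.ofFn v₂).rotate (a₂ : ℕ)).rotate (m - (a₂ : ℕ)) := by
      rw [List.rotate_rotate, show (a₂:ℕ) + (m - (a₂:ℕ)) = m from by omega, ← List.rotate_mod]
      simp
    have hv2 : List.ofFn v₂ = (List.ofFn v₁).rotate ((a₁:ℕ) + (m - (a₂ : ℕ))) := by
      rw [h2, ← heq', List.rotate_rotate]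
    have hLL : List.ofFn v₂ = List.ofFn v₁ := lyndon_rotation_unique h₁ h₂ hv2
    have hv : v₁ = v₂ := List.ofFn_injective hLL.symm
    subst hv
    have ha : (a₁ : ℕ) = (a₂ : ℕ) := by
      apply rotate_inj (lyndon_primitive h₁) (by simp [a₁.2]) (by simp [a₂.2]) heq'
    exact Prod.ext (Fin.ext ha) rfl
  · rintro w hw
    simp only [Finset.mem_filter, Finset.mem_univ, true_and] at hw
    obtain ⟨L, j, hL, hj, hwL, hLlen⟩ := exists_lyndon_rotation hw
    have hLm : L.length = m := by simpa using hLlen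
    have hjm : j < m := by simpa using hj
    refine ⟨(⟨j, hjm⟩, funOfList L hLm), ?_, ?_⟩
    · simp only [Finset.mem_product, Finset.mem_filter, Finset.mem_univ, true_and]
      rw [ofFn_funOfList]
      exact hL
    · apply List.ofFn_injective
      rw [ofFn_funOfList, ofFn_funOfList]
      exact hwL.symm

theorem sum_primCount (σ m : ℕ) (hσ : 1 ≤ σ) (hm : 1 ≤ m) :
    ∑ d ∈ m.divisors, primCount σ d = σ ^ m := by
  classical
  haveI : Inhabited (Fin σ) := ⟨⟨0, by omega⟩⟩
  have hcard : ((Finset.univ : Finset (Fin m → Fin σ))).card = σ ^ m := by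
    rw [Finset.card_univ, Fintype.card_fun, Fintype.card_fin, Fintype.card_fin]
  rw [← hcard]
  rw [Finset.card_eq_sum_card_fiberwise
    (f := fun w : Fin m → Fin σ => (primRoot (List.ofFn w)).length) (t := m.divisors) ?hmem]
  case hmem =>
    intro w _
    have hwn : List.ofFn w ≠ [] := by
      apply List.ne_nil_of_length_pos; simp; omega
    obtain ⟨hprim, k, hk1, hkw⟩ := primRoot_spec (List.ofFn w) hwn
    rw [Finset.mem_coe, Nat.mem_divisors]
    constructor
    · refine ⟨k, ?_⟩
      have := congrArg List.length hkw
      rw [List.length_ofFn, length_listPow] at this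
      show m = (primRoot (List.ofFn w)).length * k
      rw [Nat.mul_comm]; exact this
    · omega
  apply Finset.sum_congr rfl
  intro d hd
  rw [Nat.mem_divisors] at hd
  have hd1 : 1 ≤ d := by
    rcases Nat.eq_zero_or_pos d with rfl | h
    · exact absurd (Nat.eq_zero_of_zero_dvd hd.1) hd.2
    · exact h
  rw [primCount]
  symm
  apply Finset.card_bij (fun (w : Fin m → Fin σ) hw => funOfList (primRoot (List.ofFn w))
    (by simp only [Finset.mem_filter] at hw; exact hw.2))
  · intro w hw
    simp only [Finset.mem_filter, Finset.mem_univ, true_and] at hw ⊢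
    rw [ofFn_funOfList]
    have hwn : List.ofFn w ≠ [] := by
      apply List.ne_nil_of_length_pos; simp; omega
    exact (primRoot_spec (List.ofFn w) hwn).1
  · intro w₁ hw₁ w₂ hw₂ heq
    simp only [Finset.mem_filter, Finset.mem_univ, true_and] at hw₁ hw₂
    have hroot : primRoot (List.ofFn w₁) = primRoot (List.ofFn w₂) := by
      have := congrArg List.ofFn heq
      rwa [ofFn_funOfList, ofFn_funOfList] at this
    have hn1 : List.ofFn w₁ ≠ [] := by apply List.ne_nil_of_length_pos; simp; omega
    have hn2 : List.ofFn w₂ ≠ [] := by apply List.ne_nil_of_length_pos; simp; omega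
    obtain ⟨hp1, k₁, hk₁, he₁⟩ := primRoot_spec (List.ofFn w₁) hn1
    obtain ⟨hp2, k₂, hk₂, he₂⟩ := primRoot_spec (List.ofFn w₂) hn2
    have hdpos : 0 < (primRoot (List.ofFn w₁)).length := List.length_pos_iff.2 hp1.1
    have hkk : k₁ = k₂ := by
      have l1 := congrArg List.length he₁
      have l2 := congrArg List.length he₂
      rw [List.length_ofFn, length_listPow] at l1 l2
      rw [← hroot] at l2
      exact Nat.eq_of_mul_eq_mul_right hdpos (by omega)
    apply List.ofFn_injective
    rw [he₁, he₂, ← hroot, hkk]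
  · intro x hx
    simp only [Finset.mem_filter, Finset.mem_univ, true_and] at hx
    have hxlen : (List.ofFn x).length = d := by simp
    have hmd : m / d * d = m := Nat.div_mul_cancel hd.1
    have hmd1 : 1 ≤ m / d := (Nat.one_le_div_iff (by omega)).2 (Nat.le_of_dvd (by omega) hd.1)
    have hlen : (listPow (List.ofFn x) (m / d)).length = m := by
      rw [length_listPow, hxlen]; omega
    refine ⟨funOfList (listPow (List.ofFn x) (m / d)) hlen, ?_, ?_⟩
    · have hofn : List.ofFn (funOfList (listPow (List.ofFn x) (m / d)) hlen)
          = listPow (List.ofFn x) (m / d) := ofFn_funOfList _ _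
      have hxn : List.ofFn x ≠ [] := by apply List.ne_nil_of_length_pos; omega
      have hwn : List.ofFn (funOfList (listPow (List.ofFn x) (m / d)) hlen) ≠ [] := by
        apply List.ne_nil_of_length_pos; rw [hofn]; rw [hlen]; omega
      obtain ⟨hpr, k, hk1, hkw⟩ := primRoot_spec _ hwn
      have hre : primRoot (List.ofFn (funOfList (listPow (List.ofFn x) (m / d)) hlen))
          = List.ofFn x := by
        have heq2 : listPow (primRoot (List.ofFn (funOfList (listPow (List.ofFn x) (m/d)) hlen))) k
            = listPow (List.ofFn x) (m / d) := by rw [← hkw, hofn]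
        exact (primitive_root_unique hpr hx hk1 hmd1 heq2).1
      simp only [Finset.mem_filter, Finset.mem_univ, true_and]
      rw [hre, hxlen]
    · apply List.ofFn_injective
      rw [ofFn_funOfList]
      have hofn : List.ofFn (funOfList (listPow (List.ofFn x) (m / d)) hlen)
          = listPow (List.ofFn x) (m / d) := ofFn_funOfList _ _
      have hxn : List.ofFn x ≠ [] := by apply List.ne_nil_of_length_pos; omega
      have hwn : List.ofFn (funOfList (listPow (List.ofFn x) (m / d)) hlen) ≠ [] := by
        apply List.ne_nil_of_length_pos; rw [hofn, hlen]; omega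
      obtain ⟨hpr, k, hk1, hkw⟩ := primRoot_spec _ hwn
      have heq2 : listPow (primRoot (List.ofFn (funOfList (listPow (List.ofFn x) (m/d)) hlen))) k
          = listPow (List.ofFn x) (m / d) := by rw [← hkw, hofn]
      exact (primitive_root_unique hpr hx hk1 hmd1 heq2).1

end LyndonAux

namespace LyndonAux

open Finset

theorem primCount_formula (σ m : ℕ) (hσ : 1 ≤ σ) (hm : 1 ≤ m) :
    (primCount σ m : ℚ) =
      ∑ d ∈ m.divisors, ((ArithmeticFunction.moebius (m / d) : ℤ) : ℚ) * (σ : ℚ) ^ d := by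
  classical
  have hsum : ∀ n > 0, ∑ d ∈ n.divisors, ((primCount σ d : ℚ)) = (σ : ℚ) ^ n := by
    intro n hn
    rw [← Nat.cast_pow, ← sum_primCount σ n hσ (by omega), Nat.cast_sum]
  have key := (ArithmeticFunction.sum_eq_iff_sum_smul_moebius_eq
    (R := ℚ) (f := fun d => (primCount σ d : ℚ)) (g := fun n => (σ : ℚ) ^ n)).mp hsum m (by omega)
  rw [← key]
  rw [← Nat.sum_divisorsAntidiagonal' (f := fun a b =>
    ((ArithmeticFunction.moebius a : ℤ) : ℚ) * (σ : ℚ) ^ b)]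
  apply Finset.sum_congr rfl
  intro x _
  rw [zsmul_eq_mul]

theorem factor_eq {σ n i m : ℕ} (w : Fin n → Fin σ) (him : i + m ≤ n) :
    ((List.ofFn w).drop i).take m = List.ofFn (fun j : Fin m => w ⟨i + j, by omega⟩) := by
  apply List.ext_getElem
  · simp; omega
  · intro j h1 h2
    have hj : j < m := by simpa using h2
    rw [List.getElem_take, List.getElem_drop, List.getElem_ofFn, List.getElem_ofFn]

theorem count_fixed (σ n i m : ℕ) (hσ : 1 ≤ σ) (him : i + m ≤ n) (hm : 1 ≤ m) :
    ((Finset.univ : Finset (Fin n → Fin σ)).filter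
      (fun w => IsLyndon (((List.ofFn w).drop i).take m))).card
      = lynCount σ m * σ ^ (n - m) := by
  classical
  have hcard : (((Finset.univ : Finset (Fin m → Fin σ)).filter
      (fun v => IsLyndon (List.ofFn v))) ×ˢ (Finset.univ : Finset (Fin (n-m) → Fin σ))).card
      = lynCount σ m * σ ^ (n - m) := by
    rw [Finset.card_product, Finset.card_univ, Fintype.card_fun, Fintype.card_fin,
      Fintype.card_fin, lynCount]
  rw [← hcard]
  have hmid : ∀ j : Fin m, i + (j : ℕ) < n := fun j => by omega
  have hembp : ∀ j : Fin (n-m), ¬ ((j : ℕ) < i) → (j : ℕ) + m < n := fun j h => by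
    have := j.2; omega
  refine Finset.card_bij'
    (fun w _ => ((fun j : Fin m => w ⟨i + j, hmid j⟩),
      (fun j : Fin (n-m) => w (if h : (j : ℕ) < i then ⟨j, by omega⟩
        else ⟨(j:ℕ) + m, hembp j h⟩))))
    (fun p _ => (fun t : Fin n =>
      if h : (t : ℕ) < i then p.2 ⟨t, by omega⟩
      else if h2 : (t : ℕ) < i + m then p.1 ⟨(t:ℕ) - i, by omega⟩
      else p.2 ⟨(t:ℕ) - m, by have := t.2; omega⟩)) ?hi ?hj ?left ?right
  case hi =>
    intro w hw
    simp only [Finset.mem_filter, Finset.mem_univ, true_and] at hw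
    simp only [Finset.mem_product, Finset.mem_filter, Finset.mem_univ, true_and, and_true]
    rw [← factor_eq w him]
    exact hw
  case hj =>
    intro p hp
    simp only [Finset.mem_product, Finset.mem_filter, Finset.mem_univ, true_and, and_true] at hp
    simp only [Finset.mem_filter, Finset.mem_univ, true_and]
    rw [factor_eq _ him]
    have hfn : (fun j : Fin m => (fun t : Fin n =>
      if h : (t : ℕ) < i then p.2 ⟨t, by omega⟩
      else if h2 : (t : ℕ) < i + m then p.1 ⟨(t:ℕ) - i, by omega⟩
      else p.2 ⟨(t:ℕ) - m, by have := t.2; omega⟩) ⟨i + (j:ℕ), hmid j⟩) = p.1 := by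
      funext j
      have hj := j.2
      simp only
      rw [dif_neg (by omega), dif_pos (by omega)]
      congr 1
      apply Fin.ext
      simp
    rw [hfn]
    exact hp
  case left =>
    intro w hw
    funext t
    have ht := t.2
    simp only
    by_cases h : (t : ℕ) < i
    · rw [dif_pos h]
      congr 1
      rw [dif_pos h]
    · by_cases h2 : (t : ℕ) < i + m
      · rw [dif_neg h, dif_pos h2]
        congr 1
        apply Fin.ext
        simp
        omega
      · rw [dif_neg h, dif_neg h2, dif_neg (by simp; omega)]
        congr 1
        apply Fin.ext
        simp
        omega
  case right =>
    intro p hp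
    apply Prod.ext
    · funext j
      have hj := j.2
      simp only
      rw [dif_neg (by omega), dif_pos (by omega)]
      congr 1
      apply Fin.ext
      simp
    · funext j
      have hj := j.2
      simp only
      by_cases h : (j : ℕ) < i
      · rw [dif_pos h, dif_pos (by simpa using h)]
      · rw [dif_neg h, dif_neg (by simp; omega), dif_neg (by simp; omega)]
        congr 1
        apply Fin.ext
        simp

end LyndonAux


open LyndonAux

theorem expected_total_lyndon_factors (σ n : ℕ) (hσ : 1 ≤ σ) :
    (∑ w : Fin n → Fin σ,
        ((((Finset.range n) ×ˢ (Finset.Icc 1 n)).filter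
          (fun p : ℕ × ℕ => p.1 + p.2 ≤ n ∧
            IsLyndon (((List.ofFn w).drop p.1).take p.2))).card : ℚ)) =
      ∑ m ∈ Finset.Icc 1 n, (((n : ℚ) - (m : ℚ) + 1) / (m : ℚ)) * (σ : ℚ) ^ (n - m) *
        ∑ d ∈ m.divisors, ((ArithmeticFunction.moebius (m / d) : ℤ) : ℚ) * (σ : ℚ) ^ d := by
  classical
  have step1 : ∀ w : Fin n → Fin σ,
      ((((Finset.range n) ×ˢ (Finset.Icc 1 n)).filter
        (fun p : ℕ × ℕ => p.1 + p.2 ≤ n ∧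
          IsLyndon (((List.ofFn w).drop p.1).take p.2))).card : ℚ)
      = ∑ p ∈ (Finset.range n) ×ˢ (Finset.Icc 1 n),
          (if p.1 + p.2 ≤ n ∧ IsLyndon (((List.ofFn w).drop p.1).take p.2)
            then (1:ℚ) else 0) := by
    intro w
    rw [Finset.card_filter, Nat.cast_sum]
    apply Finset.sum_congr rfl
    intro p _
    split_ifs <;> simp
  rw [Finset.sum_congr rfl (fun w _ => step1 w), Finset.sum_comm]
  have step2 : ∀ p ∈ (Finset.range n) ×ˢ (Finset.Icc 1 n),
      (∑ w : Fin n → Fin σ, if p.1 + p.2 ≤ n ∧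
          IsLyndon (((List.ofFn w).drop p.1).take p.2) then (1:ℚ) else 0)
      = if p.1 + p.2 ≤ n then ((lynCount σ p.2 * σ ^ (n - p.2) : ℕ) : ℚ) else 0 := by
    rintro ⟨i, m⟩ hp
    simp only [Finset.mem_product, Finset.mem_range, Finset.mem_Icc] at hp
    by_cases him : i + m ≤ n
    · rw [if_pos him]
      have hsimp : ∀ w : Fin n → Fin σ,
          (if i + m ≤ n ∧ IsLyndon (((List.ofFn w).drop i).take m) then (1:ℚ) else 0)
          = if IsLyndon (((List.ofFn w).drop i).take m) then (1:ℚ) else 0 := by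
        intro w; simp [him]
      rw [Finset.sum_congr rfl (fun w _ => hsimp w), Finset.sum_boole,
        count_fixed σ n i m hσ him hp.2.1]
    · rw [if_neg him]
      apply Finset.sum_eq_zero
      intro w _
      rw [if_neg (by tauto)]
  rw [Finset.sum_congr rfl step2, Finset.sum_product_right]
  apply Finset.sum_congr rfl
  intro m hm
  rw [Finset.mem_Icc] at hm
  have hm1 : 1 ≤ m := hm.1
  have hmn : m ≤ n := hm.2
  have hinner : (∑ i ∈ Finset.range n,
      if i + m ≤ n then ((lynCount σ m * σ ^ (n - m) : ℕ) : ℚ) else 0)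
      = ((n - m + 1 : ℕ) : ℚ) * ((lynCount σ m * σ ^ (n - m) : ℕ) : ℚ) := by
    rw [← Finset.sum_filter]
    have hfil : (Finset.range n).filter (fun i => i + m ≤ n) = Finset.range (n - m + 1) := by
      apply Finset.ext
      intro i
      simp only [Finset.mem_filter, Finset.mem_range]
      omega
    rw [hfil, Finset.sum_const, Finset.card_range, nsmul_eq_mul]
  rw [hinner, ← primCount_formula σ m hσ hm1, primCount_eq_mul σ m hσ hm1]
  have hmQ : (m : ℚ) ≠ 0 := by positivity
  have hc : ((n : ℚ) - (m : ℚ) + 1) = ((n - m + 1 : ℕ) : ℚ) := by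
    push_cast [Nat.cast_sub hmn]
    ring
  rw [hc]
  push_cast
  field_simp
end

section
/- Let L be a borderless word of length m ≤ n over an alphabet Σ of size σ. The number of words in Σ^n containing at least one occurrence of L equals Σ_{s=1}^{⌊n/m⌋} (−1)^{s+1}·C(n − sm + s, s)·σ^{n − sm}. -/
open scoped Classical

open Finset

lemma occ_iff {σ n : ℕ} (L : List (Fin σ)) (w : Fin n → Fin σ) (i : ℕ) (h : i + L.length ≤ n) :
    L <+: (List.ofFn w).drop i ↔
      ∀ (t : ℕ) (ht : t < L.length), w ⟨i + t, by omega⟩ = L[t] := by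
  rw [List.prefix_iff_eq_take]
  constructor
  · intro he t ht
    rw [List.getElem_of_eq he ht, List.getElem_take, List.getElem_drop, List.getElem_ofFn]
  · intro hp
    apply List.ext_getElem
    · simp; omega
    · intro t h1 h2
      rw [List.getElem_take, List.getElem_drop, List.getElem_ofFn]
      exact (hp t h1).symm

lemma infix_iff {σ n : ℕ} (L : List (Fin σ)) (w : Fin n → Fin σ)
    (hmn : L.length ≤ n) :
    L <:+: List.ofFn w ↔ ∃ i ∈ range (n - L.length + 1), L <+: (List.ofFn w).drop i := by
  constructor
  · rintro ⟨s, t, hst⟩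
    refine ⟨s.length, ?_, ?_⟩
    · have h2 : (s ++ L ++ t).length = n := by rw [hst]; simp
      simp only [List.length_append] at h2
      simp [mem_range]; omega
    · rw [← hst, List.append_assoc, List.drop_left]
      exact L.prefix_append t
  · rintro ⟨i, _, hp⟩
    exact hp.isInfix.trans (List.drop_suffix i _).isInfix

def Sparse (m : ℕ) (T : Finset ℕ) : Prop := ∀ i ∈ T, ∀ j ∈ T, i < j → i + m ≤ j

lemma growth_aux {s : ℕ} (f : Fin s → ℕ) (c : ℕ)
    (hstep : ∀ (k : ℕ) (h : k + 1 < s), f ⟨k, Nat.lt_of_succ_lt h⟩ + c ≤ f ⟨k + 1, h⟩) :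
    ∀ (d k : ℕ) (hk : k < s) (h : k + d < s), f ⟨k, hk⟩ + d * c ≤ f ⟨k + d, h⟩ := by
  intro d
  induction d with
  | zero => intro k hk h; simp [Fin.mk.injEq]
  | succ d ih =>
    intro k hk h
    have h1 : k + d < s := by omega
    have h2 := ih k hk h1
    have h3 : f ⟨k + d, h1⟩ + c ≤ f ⟨k + (d + 1), h⟩ := hstep (k + d) h
    have h4 : (d + 1) * c = d * c + c := by ring
    omega

lemma sparse_step {s : ℕ} (T : Finset ℕ) (hT : #T = s) (m : ℕ) (hsp : Sparse m T)
    (k : ℕ) (h : k + 1 < s) :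
    T.orderEmbOfFin hT ⟨k, Nat.lt_of_succ_lt h⟩ + m ≤ T.orderEmbOfFin hT ⟨k + 1, h⟩ := by
  apply hsp _ (Finset.orderEmbOfFin_mem _ _ _) _ (Finset.orderEmbOfFin_mem _ _ _)
  exact (T.orderEmbOfFin hT).strictMono (Fin.mk_lt_mk.2 (Nat.lt_succ_self k))

lemma sparse_growth {s : ℕ} (T : Finset ℕ) (hT : #T = s) (m : ℕ) (hsp : Sparse m T)
    (k : ℕ) (hk : k < s) : k * m ≤ T.orderEmbOfFin hT ⟨k, hk⟩ := by
  have h0 : (0 : ℕ) < s := by omega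
  have h0k : 0 + k < s := by omega
  have h := growth_aux (T.orderEmbOfFin hT) m (sparse_step T hT m hsp) k 0 h0 h0k
  have e : (⟨0 + k, h0k⟩ : Fin s) = ⟨k, hk⟩ := by simp
  rw [e] at h
  omega

lemma sparse_chain {s m : ℕ} (T : Finset ℕ) (hT : #T = s) (hsp : Sparse m T)
    (k l : Fin s) (h : k < l) :
    T.orderEmbOfFin hT k + (l.1 - k.1) * m ≤ T.orderEmbOfFin hT l := by
  have h2 : k.1 + (l.1 - k.1) < s := by have := l.2; omega
  have h3 := growth_aux (T.orderEmbOfFin hT) m (sparse_step T hT m hsp) (l.1 - k.1) k.1 k.2 h2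
  have e : (⟨k.1 + (l.1 - k.1), h2⟩ : Fin s) = l := by
    apply Fin.ext; simp; omega
  rw [e] at h3
  exact h3

lemma emb_chain {s : ℕ} (U : Finset ℕ) (hU : #U = s) (k l : Fin s) (h : k < l) :
    U.orderEmbOfFin hU k + (l.1 - k.1) ≤ U.orderEmbOfFin hU l := by
  have hstep : ∀ (a : ℕ) (ha : a + 1 < s),
      U.orderEmbOfFin hU ⟨a, Nat.lt_of_succ_lt ha⟩ + 1 ≤ U.orderEmbOfFin hU ⟨a + 1, ha⟩ :=
    fun a ha => (U.orderEmbOfFin hU).strictMono (Fin.mk_lt_mk.2 (Nat.lt_succ_self a))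
  have h2 : k.1 + (l.1 - k.1) < s := by have := l.2; omega
  have h3 := growth_aux (U.orderEmbOfFin hU) 1 hstep (l.1 - k.1) k.1 k.2 h2
  have e : (⟨k.1 + (l.1 - k.1), h2⟩ : Fin s) = l := by
    apply Fin.ext; simp; omega
  rw [e, mul_one] at h3
  exact h3

lemma image_orderEmbOfFin {s : ℕ} (T : Finset ℕ) (hT : #T = s) :
    image (T.orderEmbOfFin hT) univ = T := by
  apply Finset.coe_inj.1
  rw [coe_image, coe_univ, Set.image_univ, Finset.range_orderEmbOfFin]

lemma sparse_none {n m s : ℕ} (hmn : m ≤ n) (h1 : 1 ≤ s) (hsm : n < s * m)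
    (T : Finset ℕ) (hT : T ∈ ((range (n - m + 1)).powersetCard s).filter (fun T => Sparse m T)) :
    False := by
  rw [mem_filter, mem_powersetCard] at hT
  obtain ⟨⟨hsub, hcard⟩, hsp⟩ := hT
  have hk : s - 1 < s := by omega
  have h2 := sparse_growth T hcard m hsp (s - 1) hk
  have h3 := hsub (Finset.orderEmbOfFin_mem _ hcard ⟨s - 1, hk⟩)
  rw [mem_range] at h3
  have h4 : (s - 1) * m + m = s * m := by
    have h5 : s - 1 + 1 = s := by omega
    calc (s - 1) * m + m = (s - 1 + 1) * m := by ring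
    _ = s * m := by rw [h5]
  omega

lemma phi_lb {s m' : ℕ} (T : Finset ℕ) (hc : #T = s) (hsp : Sparse (m' + 1) T) (k : Fin s) :
    k.1 * (m' + 1) ≤ T.orderEmbOfFin hc k := by
  have := sparse_growth T hc (m' + 1) hsp k.1 k.2
  simpa using this

lemma phi_strictMono {s m' : ℕ} (T : Finset ℕ) (hc : #T = s) (hsp : Sparse (m' + 1) T) :
    StrictMono (fun k : Fin s => T.orderEmbOfFin hc k - k.1 * m') := by
  intro k l hkl
  show T.orderEmbOfFin hc k - k.1 * m' < T.orderEmbOfFin hc l - l.1 * m'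
  have c1 := sparse_chain T hc hsp k l hkl
  have c2 := phi_lb T hc hsp k
  have hkl' : k.1 < l.1 := hkl
  have e1 : (l.1 - k.1) * (m' + 1) = (l.1 - k.1) * m' + (l.1 - k.1) := by ring
  have e2 : l.1 * m' = k.1 * m' + (l.1 - k.1) * m' := by
    have h5 : k.1 + (l.1 - k.1) = l.1 := by omega
    calc l.1 * m' = (k.1 + (l.1 - k.1)) * m' := by rw [h5]
    _ = k.1 * m' + (l.1 - k.1) * m' := by ring
  have e3 : k.1 * (m' + 1) = k.1 * m' + k.1 := by ring
  omega

lemma psi_strictMono {s m' : ℕ} (U : Finset ℕ) (hc : #U = s) :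
    StrictMono (fun k : Fin s => U.orderEmbOfFin hc k + k.1 * m') := by
  intro k l hkl
  show U.orderEmbOfFin hc k + k.1 * m' < U.orderEmbOfFin hc l + l.1 * m'
  have h5 : U.orderEmbOfFin hc k < U.orderEmbOfFin hc l := (U.orderEmbOfFin hc).strictMono hkl
  have h6 : k.1 * m' ≤ l.1 * m' := Nat.mul_le_mul_right m' (le_of_lt (show k.1 < l.1 from hkl))
  omega

lemma sparse_count {n m s : ℕ} (hm : 1 ≤ m) (hmn : m ≤ n) (h1 : 1 ≤ s) (hsm : s * m ≤ n) :
    #(((range (n - m + 1)).powersetCard s).filter (fun T => Sparse m T))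
      = (n - s * m + s).choose s := by
  obtain ⟨m', rfl⟩ : ∃ m', m = m' + 1 := ⟨m - 1, by omega⟩
  obtain ⟨s', rfl⟩ : ∃ s', s = s' + 1 := ⟨s - 1, by omega⟩
  have hchoose : (n - (s' + 1) * (m' + 1) + (s' + 1)).choose (s' + 1)
      = #(powersetCard (s' + 1) (range (n - (s' + 1) * (m' + 1) + (s' + 1)))) := by
    rw [card_powersetCard, card_range]
  rw [hchoose]
  have hsm' : (s' + 1) * (m' + 1) = s' * m' + s' + m' + 1 := by ring
  have hs'm : s' * (m' + 1) = s' * m' + s' := by ring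
  refine card_bij'
    (fun T hT => image
      (fun k : Fin (s' + 1) =>
        T.orderEmbOfFin ((mem_powersetCard.1 (mem_filter.1 hT).1).2) k - k.1 * m') univ)
    (fun U hU => image
      (fun k : Fin (s' + 1) => U.orderEmbOfFin ((mem_powersetCard.1 hU).2) k + k.1 * m') univ)
    ?hi ?hj ?left ?right
  case hi =>
    intro T hT
    obtain ⟨hTp, hsp⟩ := mem_filter.1 hT
    have hc := (mem_powersetCard.1 (mem_filter.1 hT).1).2
    have hsub := (mem_powersetCard.1 (mem_filter.1 hT).1).1
    have hmono := phi_strictMono T hc hsp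
    rw [mem_powersetCard]
    constructor
    · intro x hx
      obtain ⟨k, _, rfl⟩ := mem_image.1 hx
      rw [mem_range]
      have hss : s' < s' + 1 := by omega
      have hlast : T.orderEmbOfFin hc ⟨s', hss⟩ ≤ n - (m' + 1) := by
        have h6 := hsub (Finset.orderEmbOfFin_mem _ hc ⟨s', hss⟩)
        rw [mem_range] at h6
        omega
      have hklast : k ≤ (⟨s', hss⟩ : Fin (s' + 1)) := by
        rw [Fin.le_def]; have := k.2; simpa using by omega
      have hle : T.orderEmbOfFin hc k - k.1 * m'
          ≤ T.orderEmbOfFin hc ⟨s', hss⟩ - s' * m' := hmono.monotone hklast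
      have hlbl := phi_lb T hc hsp ⟨s', hss⟩
      simp only [] at hlbl
      omega
    · rw [card_image_of_injective _ hmono.injective, card_univ, Fintype.card_fin]
  case hj =>
    intro U hU
    have hc := (mem_powersetCard.1 hU).2
    have hsub := (mem_powersetCard.1 hU).1
    have hmono := psi_strictMono (m' := m') U hc
    have hub : ∀ k : Fin (s' + 1), U.orderEmbOfFin hc k < n - (s' + 1) * (m' + 1) + (s' + 1) := by
      intro k
      have := hsub (Finset.orderEmbOfFin_mem _ hc k)
      rwa [mem_range] at this
    rw [mem_filter, mem_powersetCard]
    refine ⟨⟨?_, ?_⟩, ?_⟩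
    · intro x hx
      obtain ⟨k, _, rfl⟩ := mem_image.1 hx
      rw [mem_range]
      have h7 := hub k
      have h8 : k.1 * m' ≤ s' * m' := Nat.mul_le_mul_right m' (by have := k.2; omega)
      omega
    · rw [card_image_of_injective _ hmono.injective, card_univ, Fintype.card_fin]
    · intro a ha b hb hab
      obtain ⟨k, _, rfl⟩ := mem_image.1 ha
      obtain ⟨l, _, rfl⟩ := mem_image.1 hb
      have hab' : U.orderEmbOfFin hc k + k.1 * m' < U.orderEmbOfFin hc l + l.1 * m' := hab
      show U.orderEmbOfFin hc k + k.1 * m' + (m' + 1) ≤ U.orderEmbOfFin hc l + l.1 * m'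
      have hkl : k < l := by
        by_contra hcon
        push_neg at hcon
        have h12 : U.orderEmbOfFin hc l + l.1 * m' ≤ U.orderEmbOfFin hc k + k.1 * m' :=
          hmono.monotone hcon
        omega
      have h9 := emb_chain U hc k l hkl
      have e2 : l.1 * m' = k.1 * m' + (l.1 - k.1) * m' := by
        have h5 : k.1 + (l.1 - k.1) = l.1 := by have : k.1 < l.1 := hkl; omega
        calc l.1 * m' = (k.1 + (l.1 - k.1)) * m' := by rw [h5]
        _ = k.1 * m' + (l.1 - k.1) * m' := by ring
      have h10 : 1 * m' ≤ (l.1 - k.1) * m' :=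
        Nat.mul_le_mul_right m' (by have : k.1 < l.1 := hkl; omega)
      have h11 : 1 ≤ l.1 - k.1 := by have : k.1 < l.1 := hkl; omega
      omega
  case left =>
    intro T hT
    obtain ⟨hTp, hsp⟩ := mem_filter.1 hT
    have hc := (mem_powersetCard.1 (mem_filter.1 hT).1).2
    have hmono := phi_strictMono T hc hsp
    have hval : ∀ (p : #(image (fun k : Fin (s' + 1) =>
          T.orderEmbOfFin hc k - k.1 * m') univ) = s' + 1) (k : Fin (s' + 1)),
        (image (fun k : Fin (s' + 1) => T.orderEmbOfFin hc k - k.1 * m') univ).orderEmbOfFin p k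
          = T.orderEmbOfFin hc k - k.1 * m' := by
      intro p k
      exact (congrFun (Finset.orderEmbOfFin_unique p
        (fun x => mem_image_of_mem _ (mem_univ x)) hmono) k).symm
    simp only [hval]
    calc image (fun k : Fin (s' + 1) => T.orderEmbOfFin hc k - k.1 * m' + k.1 * m') univ
        = image (fun k : Fin (s' + 1) => T.orderEmbOfFin hc k) univ := by
          apply Finset.image_congr
          intro k _
          show T.orderEmbOfFin hc k - k.1 * m' + k.1 * m' = T.orderEmbOfFin hc k
          have := phi_lb T hc hsp k
          have e3 : k.1 * (m' + 1) = k.1 * m' + k.1 := by ring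
          omega
      _ = T := image_orderEmbOfFin T hc
  case right =>
    intro U hU
    have hc := (mem_powersetCard.1 hU).2
    have hmono := psi_strictMono (m' := m') U hc
    have hval : ∀ (p : #(image (fun k : Fin (s' + 1) =>
          U.orderEmbOfFin hc k + k.1 * m') univ) = s' + 1) (k : Fin (s' + 1)),
        (image (fun k : Fin (s' + 1) => U.orderEmbOfFin hc k + k.1 * m') univ).orderEmbOfFin p k
          = U.orderEmbOfFin hc k + k.1 * m' := by
      intro p k
      exact (congrFun (Finset.orderEmbOfFin_unique p
        (fun x => mem_image_of_mem _ (mem_univ x)) hmono) k).symm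
    simp only [hval]
    calc image (fun k : Fin (s' + 1) => U.orderEmbOfFin hc k + k.1 * m' - k.1 * m') univ
        = image (fun k : Fin (s' + 1) => U.orderEmbOfFin hc k) univ := by
          apply Finset.image_congr
          intro k _
          show U.orderEmbOfFin hc k + k.1 * m' - k.1 * m' = U.orderEmbOfFin hc k
          omega
      _ = U := image_orderEmbOfFin U hc

-- two overlapping occurrences are impossible for borderless L
lemma no_overlap {σ n m : ℕ} (hm : 1 ≤ m) (L : List (Fin σ)) (hL : L.length = m)
    (hb : Borderless L) (w : Fin n → Fin σ) (i j : ℕ) (hij : i < j) (hji : j < i + m)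
    (hjn : j + m ≤ n)
    (h1 : L <+: (List.ofFn w).drop i) (h2 : L <+: (List.ofFn w).drop j) : False := by
  have hin : i + L.length ≤ n := by omega
  have hjn' : j + L.length ≤ n := by omega
  rw [occ_iff L w i hin] at h1
  rw [occ_iff L w j hjn'] at h2
  set d := j - i with hd
  have hd1 : 1 ≤ d := by omega
  have hd2 : d < m := by omega
  have key : ∀ (t : ℕ) (ht : t < m - d), L[d + t]'(by omega) = L[t]'(by omega) := by
    intro t ht
    have e1 := h1 (d + t) (by omega)
    have e2 := h2 t (by omega)
    have e3 : (⟨i + (d + t), by omega⟩ : Fin n) = ⟨j + t, by omega⟩ := by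
      apply Fin.ext; simp; omega
    rw [e3] at e1
    rw [e2] at e1
    exact e1.symm
  have hxlen : (L.drop d).length = m - d := by rw [List.length_drop, hL]
  apply hb (L.drop d)
  · intro hnil
    rw [hnil] at hxlen
    simp at hxlen
    omega
  · omega
  refine ⟨?_, List.drop_suffix d L⟩
  rw [List.prefix_iff_eq_take]
  apply List.ext_getElem
  · rw [List.length_take]; omega
  · intro t ht1 ht2
    rw [List.getElem_take, List.getElem_drop]
    exact key t (by omega)

lemma inter_card {σ n m : ℕ} (hσ : 1 ≤ σ) (hm : 1 ≤ m) (hmn : m ≤ n) (L : List (Fin σ))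
    (hL : L.length = m) (T : Finset ℕ) (hsub : T ⊆ range (n - m + 1)) (hsp : Sparse m T) :
    #(univ.filter (fun w : Fin n → Fin σ => ∀ i ∈ T, L <+: (List.ofFn w).drop i))
      = σ ^ (n - #T * m) := by
  have hTn : ∀ i ∈ T, i + m ≤ n := by
    intro i hi
    have := hsub hi
    rw [mem_range] at this
    omega
  have huniq : ∀ (jv : ℕ), ∀ i1 ∈ T, ∀ i2 ∈ T,
      i1 ≤ jv → jv < i1 + m → i2 ≤ jv → jv < i2 + m → i1 = i2 := by
    intro jv i1 h1 i2 h2 a b c d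
    by_contra hne
    rcases lt_or_gt_of_ne hne with h | h
    · have := hsp i1 h1 i2 h2 h; omega
    · have := hsp i2 h2 i1 h1 h; omega
  classical
  set D : Finset (Fin n) := univ.filter (fun jj : Fin n => ∃ i ∈ T, i ≤ jj.1 ∧ jj.1 < i + m)
    with hD
  set g : Fin n → Fin σ := fun jj =>
    if h : ∃ i ∈ T, i ≤ jj.1 ∧ jj.1 < i + m then
      L[jj.1 - h.choose]'(by
        have := h.choose_spec
        omega)
    else ⟨0, hσ⟩
    with hg
  have hset : univ.filter (fun w : Fin n → Fin σ => ∀ i ∈ T, L <+: (List.ofFn w).drop i)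
      = Fintype.piFinset (fun jj => if jj ∈ D then ({g jj} : Finset (Fin σ)) else univ) := by
    ext w
    rw [mem_filter, Fintype.mem_piFinset]
    constructor
    · rintro ⟨-, hw⟩ jj
      by_cases hjD : jj ∈ D
      · rw [if_pos hjD, mem_singleton]
        rw [hD, mem_filter] at hjD
        have hex := hjD.2
        simp only [hg]
        rw [dif_pos hex]
        obtain ⟨hcT, hc1, hc2⟩ := hex.choose_spec
        have hocc := (occ_iff L w hex.choose (by rw [hL]; exact hTn _ hcT)).1 (hw _ hcT)
        have e := hocc (jj.1 - hex.choose) (by omega)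
        have e2 : (⟨hex.choose + (jj.1 - hex.choose), by omega⟩ : Fin n) = jj := by
          apply Fin.ext; simp; omega
        rw [e2] at e
        exact e
      · rw [if_neg hjD]; exact mem_univ _
    · intro hw
      refine ⟨mem_univ _, ?_⟩
      intro i hiT
      rw [occ_iff L w i (by rw [hL]; exact hTn _ hiT)]
      intro t ht
      have hex : ∃ i' ∈ T, i' ≤ i + t ∧ i + t < i' + m := ⟨i, hiT, by omega, by omega⟩
      have hjD : (⟨i + t, by have := hTn _ hiT; omega⟩ : Fin n) ∈ D := by
        rw [hD, mem_filter]
        exact ⟨mem_univ _, hex⟩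
      have := hw ⟨i + t, by have := hTn _ hiT; omega⟩
      rw [if_pos hjD, mem_singleton] at this
      rw [this]
      simp only [hg]
      rw [dif_pos hex]
      obtain ⟨hcT, hc1, hc2⟩ := hex.choose_spec
      have : hex.choose = i := huniq (i + t) _ hcT _ hiT hc1 hc2 (by omega) (by omega)
      congr 1
      omega
  rw [hset, Fintype.card_piFinset]
  have hprod : ∀ jj : Fin n,
      #(if jj ∈ D then ({g jj} : Finset (Fin σ)) else univ) = if jj ∈ D then 1 else σ := by
    intro jj
    split
    · exact card_singleton _
    · rw [card_univ, Fintype.card_fin]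
  rw [Finset.prod_congr rfl (fun jj _ => hprod jj)]
  rw [← Finset.prod_mul_prod_compl D]
  rw [Finset.prod_congr rfl (fun jj hj => if_pos hj),
    Finset.prod_congr rfl (fun jj (hj : jj ∈ Dᶜ) => if_neg (Finset.mem_compl.1 hj))]
  rw [Finset.prod_const_one, Finset.prod_const, one_mul, Finset.card_compl,
    Fintype.card_fin]
  congr 1
  -- #D = #T * m
  have hDcard : #D = #T * m := by
    rw [show #T * m = #(T ×ˢ range m) from by rw [card_product, card_range]]
    symm
    apply Finset.card_bij (fun p (hp : p ∈ T ×ˢ range m) =>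
      (⟨p.1 + p.2, by
        have h1 := (Finset.mem_product.1 hp).1
        have h2 := (Finset.mem_product.1 hp).2
        rw [mem_range] at h2
        have := hTn _ h1
        omega⟩ : Fin n))
    · intro p hp
      obtain ⟨h1, h2⟩ := Finset.mem_product.1 hp
      rw [mem_range] at h2
      rw [hD, mem_filter]
      refine ⟨mem_univ _, ⟨p.1, h1, ?_, ?_⟩⟩ <;> simp <;> omega
    · intro p hp q hq he
      obtain ⟨hp1, hp2⟩ := Finset.mem_product.1 hp
      obtain ⟨hq1, hq2⟩ := Finset.mem_product.1 hq
      rw [mem_range] at hp2 hq2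
      have hv : p.1 + p.2 = q.1 + q.2 := congrArg Fin.val he
      have : p.1 = q.1 := huniq (p.1 + p.2) _ hp1 _ hq1 (by omega) (by omega) (by omega)
        (by omega)
      have : p.2 = q.2 := by omega
      exact Prod.ext ‹p.1 = q.1› this
    · intro jj hj
      rw [hD, mem_filter] at hj
      obtain ⟨-, i, hiT, h1, h2⟩ := hj
      refine ⟨(i, jj.1 - i), Finset.mem_product.2 ⟨hiT, mem_range.2 (by omega)⟩, ?_⟩
      apply Fin.ext
      simp
      omega
  rw [hDcard]


theorem count_words_containing_borderless (σ n m : ℕ) (hσ : 1 ≤ σ) (hm : 1 ≤ m)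
    (hmn : m ≤ n) (L : List (Fin σ)) (hL : L.length = m) (hb : Borderless L) :
    ((((Finset.univ : Finset (Fin n → Fin σ))).filter
        (fun w => L <:+: List.ofFn w)).card : ℤ) =
      ∑ s ∈ Finset.Icc 1 (n / m), (-1 : ℤ) ^ (s + 1) *
        ((n - s * m + s).choose s : ℤ) * (σ : ℤ) ^ (n - s * m) := by
  set N := n - m + 1 with hN
  set S : ℕ → Finset (Fin n → Fin σ) :=
    fun i => univ.filter (fun w => L <+: (List.ofFn w).drop i) with hS
  have hUnion : ((Finset.univ : Finset (Fin n → Fin σ)).filter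
      (fun w => L <:+: List.ofFn w)) = (range N).biUnion S := by
    ext w
    rw [mem_filter, mem_biUnion]
    constructor
    · rintro ⟨-, hw⟩
      have hinf := (infix_iff L w (hL ▸ hmn)).1 hw
      rw [hL] at hinf
      obtain ⟨i, hi, hp⟩ := hinf
      exact ⟨i, hi, by simp only [hS, mem_filter]; exact ⟨mem_univ _, hp⟩⟩
    · rintro ⟨i, hi, hw⟩
      simp only [hS, mem_filter] at hw
      refine ⟨mem_univ _, (infix_iff L w (hL ▸ hmn)).2 ?_⟩
      rw [hL]
      exact ⟨i, hi, hw.2⟩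
  rw [hUnion, Finset.inclusion_exclusion_card_biUnion]
  have hstep1 : ∀ t : ((range N).powerset.filter (·.Nonempty)),
      ((-1 : ℤ) ^ (#t.1 + 1) * #((t.1).inf' (mem_filter.1 t.2).2 S))
        = (-1 : ℤ) ^ (#t.1 + 1) * (#(t.1.inf S) : ℤ) := by
    intro t
    rw [Finset.inf'_eq_inf]
  rw [Finset.sum_congr rfl (fun t _ => hstep1 t),
    Finset.sum_coe_sort ((range N).powerset.filter (·.Nonempty))
      (fun T => (-1 : ℤ) ^ (#T + 1) * (#(T.inf S) : ℤ))]
  have hcard : ∀ T ⊆ range N,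
      (#(T.inf S) : ℤ) = if Sparse m T then (σ : ℤ) ^ (n - #T * m) else 0 := by
    intro T hsub
    have hsub' : ∀ i ∈ T, i + m ≤ n := by
      intro i hi
      have := hsub hi
      rw [mem_range] at this
      omega
    have hinf : T.inf S = univ.filter
        (fun w : Fin n → Fin σ => ∀ i ∈ T, L <+: (List.ofFn w).drop i) := by
      ext w
      simp only [Finset.mem_inf, hS, mem_filter, mem_univ, true_and]
    split
    case isTrue hsp =>
      rw [hinf, inter_card hσ hm hmn L hL T hsub hsp]
      push_cast
      ring
    case isFalse hsp =>
      rw [hinf]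
      have hempty : (univ.filter
          (fun w : Fin n → Fin σ => ∀ i ∈ T, L <+: (List.ofFn w).drop i)) = ∅ := by
        rw [Finset.filter_eq_empty_iff]
        intro w _
        intro hw
        apply hsp
        intro i hi j hj hij
        by_contra hcon
        push_neg at hcon
        exact no_overlap hm L hL hb w i j hij (by omega) (hsub' j hj) (hw i hi) (hw j hj)
      rw [hempty]
      simp
  have hstep2 : ∀ T ∈ (range N).powerset.filter (·.Nonempty),
      (-1 : ℤ) ^ (#T + 1) * (#(T.inf S) : ℤ)
        = if Sparse m T then (-1 : ℤ) ^ (#T + 1) * (σ : ℤ) ^ (n - #T * m) else 0 := by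
    intro T hT
    rw [hcard T (mem_powerset.1 (mem_filter.1 hT).1)]
    split
    · rfl
    · ring
  rw [Finset.sum_congr rfl hstep2, Finset.sum_filter, Finset.sum_powerset, card_range]
  have hkey : ∀ j ∈ range (N + 1), (∑ T ∈ powersetCard j (range N),
      if T.Nonempty then
        (if Sparse m T then (-1 : ℤ) ^ (#T + 1) * (σ : ℤ) ^ (n - #T * m) else 0) else 0)
      = if j ∈ Finset.Icc 1 (n / m) then
          (-1 : ℤ) ^ (j + 1) * ((n - j * m + j).choose j : ℤ) * (σ : ℤ) ^ (n - j * m)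
        else 0 := by
    intro j _
    rcases Nat.eq_zero_or_pos j with rfl | hj1
    · rw [powersetCard_zero, sum_singleton, if_neg (by simp), if_neg (by simp)]
    · have hbody : ∀ T ∈ powersetCard j (range N),
          (if T.Nonempty then
            (if Sparse m T then (-1 : ℤ) ^ (#T + 1) * (σ : ℤ) ^ (n - #T * m) else 0) else 0)
          = if Sparse m T then (-1 : ℤ) ^ (j + 1) * (σ : ℤ) ^ (n - j * m) else 0 := by
        intro T hT
        obtain ⟨hsubT, hc⟩ := mem_powersetCard.1 hT
        rw [if_pos (Finset.card_pos.1 (by omega)), hc]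
      rw [Finset.sum_congr rfl hbody, ← Finset.sum_filter, Finset.sum_const]
      by_cases hle : j ≤ n / m
      · rw [if_pos (Finset.mem_Icc.2 ⟨hj1, hle⟩)]
        have hjm : j * m ≤ n := (Nat.le_div_iff_mul_le hm).1 hle
        rw [sparse_count hm hmn hj1 hjm, nsmul_eq_mul]
        push_cast
        ring
      · rw [if_neg (by rw [Finset.mem_Icc]; push_neg; intro; omega)]
        have hfe : (powersetCard j (range N)).filter (fun T => Sparse m T) = ∅ := by
          rw [Finset.filter_eq_empty_iff]
          intro T hT hsp
          exact sparse_none hmn hj1 ((Nat.div_lt_iff_lt_mul hm).1 (by omega)) T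
            (mem_filter.2 ⟨hT, hsp⟩)
        rw [hfe]
        simp
  rw [Finset.sum_congr rfl hkey, Finset.sum_ite_mem]
  congr 1
  rw [Finset.inter_eq_right]
  intro x hx
  rw [Finset.mem_Icc] at hx
  rw [mem_range]
  have hxm : x * m ≤ n := (Nat.le_div_iff_mul_le hm).1 hx.2
  obtain ⟨x', rfl⟩ : ∃ x', x = x' + 1 := ⟨x - 1, by omega⟩
  obtain ⟨m', rfl⟩ : ∃ m'', m = m'' + 1 := ⟨m - 1, by omega⟩
  have he : (x' + 1) * (m' + 1) = x' * m' + x' + m' + 1 := by ring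
  omega
end

section
/- For all n ≥ 1, the n-th standard word s_n associated with a directive sequence (d_1, d_2, d_3, ...) with d_1 ≥ 0 and d_i ≥ 1 for i ≥ 2, defined by s_{−1} = b, s_0 = a, s_n = s_{n−1}^{d_n} s_{n−2}, is a primitive word. -/
open scoped Classical

lemma listPow_count {α : Type*} [DecidableEq α] (x : List α) (k : ℕ) (c : α) :
    (listPow x k).count c = k * x.count c := by
  induction k with
  | zero => simp [listPow]
  | succ k ih =>
      have : listPow x (k + 1) = x ++ listPow x k := by
        simp [listPow, List.replicate_succ]
      rw [this, List.count_append, ih]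
      ring

theorem standard_words_primitive (d : ℕ → ℕ) (hd : ∀ i, 2 ≤ i → 1 ≤ d i)
    (t : ℕ → List (Fin 2)) (h0 : t 0 = [1]) (h1 : t 1 = [0])
    (hrec : ∀ k, 1 ≤ k → t (k + 1) = listPow (t k) (d k) ++ t (k - 1)) :
    ∀ n, 1 ≤ n → Primitive' (t (n + 1)) := by
  set a : ℕ → ℕ := fun n => (t n).count 0 with ha
  set b : ℕ → ℕ := fun n => (t n).count 1 with hb
  -- recurrences for the counts
  have areca : ∀ k, 1 ≤ k → a (k + 1) = d k * a k + a (k - 1) := by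
    intro k hk
    simp only [ha, hrec k hk, List.count_append, listPow_count]
  have arecb : ∀ k, 1 ≤ k → b (k + 1) = d k * b k + b (k - 1) := by
    intro k hk
    simp only [hb, hrec k hk, List.count_append, listPow_count]
  -- determinant identity
  have hD : ∀ n, (a (n + 1) : ℤ) * b n - a n * b (n + 1) = (-1) ^ n := by
    intro n
    induction n with
    | zero => simp [ha, hb, h0, h1]
    | succ n ih =>
        have h1n : 1 ≤ n + 1 := Nat.le_add_left 1 n
        have e1 := areca (n + 1) h1n
        have e2 := arecb (n + 1) h1n
        simp only [Nat.add_sub_cancel] at e1 e2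
        rw [e1, e2]
        push_cast
        push_cast at ih
        ring_nf
        ring_nf at ih
        linarith [ih]
  -- coprimality of counts
  have hcop : ∀ n, Nat.Coprime (a (n + 1)) (b (n + 1)) := by
    intro n
    set g := Nat.gcd (a (n + 1)) (b (n + 1)) with hg
    have hga : (g : ℤ) ∣ (a (n + 1) : ℤ) := Int.natCast_dvd_natCast.mpr (Nat.gcd_dvd_left _ _)
    have hgb : (g : ℤ) ∣ (b (n + 1) : ℤ) := Int.natCast_dvd_natCast.mpr (Nat.gcd_dvd_right _ _)
    have hdvd : (g : ℤ) ∣ (-1) ^ n := by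
      rw [← hD n]
      exact dvd_sub (hga.mul_right _) (hgb.mul_left _)
    have h1 : (g : ℤ) ∣ 1 := hdvd.trans ⟨(-1) ^ n, by rw [← pow_add, ← two_mul, pow_mul]; norm_num⟩
    have : g ∣ 1 := Int.natCast_dvd_natCast.mp (by exact_mod_cast h1)
    exact Nat.dvd_one.mp this
  intro n _
  constructor
  · intro hnil
    have := hcop n
    rw [ha, hb] at this
    simp only [hnil, List.count_nil] at this
    simp [Nat.Coprime] at this
  · intro x k hk heq
    have hA : a (n + 1) = k * x.count 0 := by rw [ha]; simp only; rw [heq, listPow_count]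
    have hB : b (n + 1) = k * x.count 1 := by rw [hb]; simp only; rw [heq, listPow_count]
    have : k ∣ Nat.gcd (a (n + 1)) (b (n + 1)) :=
      Nat.dvd_gcd ⟨_, hA⟩ ⟨_, hB⟩
    rw [hcop n] at this
    have := Nat.le_of_dvd one_pos this
    omega
end

section
/- For all n ≥ 1, the n-th finite Fibonacci word f_n, defined by f_{−1} = b, f_0 = a, f_n = f_{n−1} f_{n−2}, can be written as f_n = p_n · x · y where p_n is a palindrome and xy = ab if n is odd, xy = ba if n is even. -/
open scoped Classical

theorem fibonacci_word_palindrome_suffix (t : ℕ → List (Fin 2))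
    (h0 : t 0 = [1]) (h1 : t 1 = [0])
    (hrec : ∀ k, 1 ≤ k → t (k + 1) = t k ++ t (k - 1)) :
    ∀ n, 1 ≤ n → ∃ p : List (Fin 2), p.reverse = p ∧
      t (n + 1) = p ++ (if Odd n then [0, 1] else [1, 0]) := by
  suffices h : ∀ m, ∃ q : List (Fin 2), q.reverse = q ∧
      t (m + 1) ++ t m = q ++ (if Even m then [0, 1] else [1, 0]) ∧
      t m ++ t (m + 1) = q ++ (if Even m then [1, 0] else [0, 1]) ∧
      q ++ (t (m + 1)).reverse = t (m + 1) ++ q by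
    intro n hn
    obtain ⟨m, rfl⟩ : ∃ m, n = m + 1 := ⟨n - 1, (Nat.succ_pred_eq_of_pos hn).symm⟩
    obtain ⟨q, hq, h1', _, _⟩ := h m
    refine ⟨q, hq, ?_⟩
    have hr := hrec (m + 1) (by omega)
    simp only [Nat.add_sub_cancel] at hr
    rw [hr, h1']
    congr 1
    rcases Nat.even_or_odd m with he | he
    · simp [he, Nat.even_add_one, ← Nat.not_even_iff_odd]
    · simp [Nat.not_even_iff_odd.mpr he, Nat.even_add_one,
        ← Nat.not_even_iff_odd, Nat.not_even_iff_odd.mpr he]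
  intro m
  induction m with
  | zero => exact ⟨[], rfl, by simp [h0, h1], by simp [h0, h1], by simp [h1]⟩
  | succ m ih =>
    obtain ⟨q, hq, ha, hb, hc⟩ := ih
    have hr := hrec (m + 1) (by omega)
    simp only [Nat.add_sub_cancel] at hr
    refine ⟨t (m + 1) ++ q, ?_, ?_, ?_, ?_⟩
    · rw [List.reverse_append, hq, hc]
    · rw [hr]
      rcases Nat.even_or_odd m with he | he
      · simp only [he, if_pos, Nat.even_add_one, Nat.not_even_iff_odd,
          ← Nat.not_even_iff_odd] at ha hb ⊢
        rw [if_neg (by simpa using he), List.append_assoc, hb, List.append_assoc]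
      · have he' : ¬ Even m := Nat.not_even_iff_odd.mpr he
        simp only [if_neg he'] at ha hb
        rw [if_pos (Nat.even_add_one.mpr he'), List.append_assoc, hb, List.append_assoc]
    · rw [hr]
      rcases Nat.even_or_odd m with he | he
      · simp only [he, if_pos] at ha
        rw [if_neg (by simp [Nat.even_add_one, he]), List.append_assoc, ha,
          ← List.append_assoc]
      · have he' : ¬ Even m := Nat.not_even_iff_odd.mpr he
        simp only [if_neg he'] at ha
        rw [if_pos (Nat.even_add_one.mpr he'), List.append_assoc, ha,
          ← List.append_assoc]
    · -- (t(m+1) ++ q) ++ rev(t(m+2)) = t(m+2) ++ (t(m+1) ++ q)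
      rw [hr]
      have hrev : (t (m + 1) ++ t m).reverse =
          (if Even m then ([1, 0] : List (Fin 2)) else [0, 1]) ++ q := by
        rw [ha]
        rcases Nat.even_or_odd m with he | he
        · simp [he, hq]
        · simp [Nat.not_even_iff_odd.mpr he, hq]
      have key : q ++ ((if Even m then ([1, 0] : List (Fin 2)) else [0, 1]) ++ q) =
          t m ++ (t (m + 1) ++ q) := by
        rw [← List.append_assoc, ← hb, List.append_assoc]
      rw [hrev, List.append_assoc, List.append_assoc, key]
end

section
/- For all n ≥ 1, the word a·p_n·b is the unique Lyndon word in the conjugacy class of the finite Fibonacci word f_n, where f_n = p_n·x·y with p_n a palindrome and xy ∈ {ab, ba}. -/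
open scoped Classical

/-! ### Generic lemmas about `List.Lex` and Lyndon words -/

section Generic

variable {α : Type*}

theorem lex_append_of_not_prefix {r : α → α → Prop} :
    ∀ {s t : List α}, List.Lex r s t → ¬ s <+: t →
      ∀ (z z' : List α), List.Lex r (s ++ z) (t ++ z') := by
  intro s t h
  induction h with
  | nil => intro hp _ _; exact absurd List.nil_prefix hp
  | @cons a l₁ l₂ h ih =>
      intro hp z z'
      simp only [List.cons_append]
      exact List.Lex.cons (ih (fun hpre => hp (List.cons_prefix_cons.mpr ⟨rfl, hpre⟩)) z z')
  | @rel a l₁ b l₂ h => intro _ z z'; simp only [List.cons_append]; exact List.Lex.rel h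

theorem suffix_of_suffix_le {l s v : List α} (hs : s <:+ l) (hv : v <:+ l)
    (h : s.length ≤ v.length) : s <:+ v := by
  obtain ⟨a, ha⟩ := hs
  obtain ⟨b, hb⟩ := hv
  have hs' : s = l.drop a.length := by rw [← ha]; simp
  have hv' : v = l.drop b.length := by rw [← hb]; simp
  have hab : b.length ≤ a.length := by
    have h1 := congrArg List.length ha
    have h2 := congrArg List.length hb
    simp only [List.length_append] at h1 h2
    omega
  rw [hs', hv']
  have hdd : (l.drop b.length).drop (a.length - b.length) = l.drop a.length := by
    rw [List.drop_drop]; congr 1; omega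
  rw [← hdd]
  exact List.drop_suffix _ _

variable [LinearOrder α]

/-- A Lyndon word is lexicographically smaller than each of its nontrivial rotations. -/
theorem lyndon_lex_rot {w x y : List α} (hw : IsLyndon w) (hxy : x ++ y = w)
    (hx : x ≠ []) (hy : y ≠ []) : List.Lex (· < ·) w (y ++ x) := by
  have hys : y <:+ w := hxy ▸ List.suffix_append x y
  have hlw : x.length + y.length = w.length := by
    have := congrArg List.length hxy; simpa using this
  have hxpos : 0 < x.length := List.length_pos_iff.mpr hx
  have hyne : y ≠ w := by
    intro h
    have := congrArg List.length h
    omega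
  have hlex : List.Lex (· < ·) w y := hw.2 y hys hy hyne
  have hnp : ¬ w <+: y := by
    intro hpre
    have := hpre.length_le
    omega
  have := lex_append_of_not_prefix hlex hnp [] x
  simpa using this

/-- Product of Lyndon words `u < v` is Lyndon. -/
theorem isLyndon_append {u v : List α} (hu : IsLyndon u) (hv : IsLyndon v)
    (huv : List.Lex (· < ·) u v) : IsLyndon (u ++ v) := by
  obtain ⟨hune, hus⟩ := hu
  obtain ⟨hvne, hvs⟩ := hv
  have hupos : 0 < u.length := List.length_pos_iff.mpr hune
  have hvpos : 0 < v.length := List.length_pos_iff.mpr hvne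
  refine ⟨by simp [hune], ?_⟩
  intro s hs hne hneq
  by_cases hsv : s <:+ v
  · -- s is a suffix of v
    have hlex_us : List.Lex (· < ·) u s := by
      rcases eq_or_ne s v with rfl | hne2
      · exact huv
      · exact List.lex_trans lt_trans huv (hvs s hsv hne hne2)
    by_cases hpre : u <+: s
    · obtain ⟨r, rfl⟩ := hpre
      have hrne : r ≠ [] := by
        rintro rfl
        rw [List.append_nil] at hlex_us
        exact (asymm hlex_us) hlex_us
      have hrsuf : r <:+ v := (List.suffix_append u r).trans hsv
      have hlens : (u ++ r).length ≤ v.length := hsv.length_le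
      have hrnev : r ≠ v := by
        intro h
        have := congrArg List.length h
        simp only [List.length_append] at hlens
        omega
      exact List.Lex.append_left _ (hvs r hrsuf hrne hrnev) u
    · have := lex_append_of_not_prefix hlex_us hpre v []
      simpa using this
  · -- v is a proper suffix of s, s = s' ++ v with s' a suffix of u
    have hvle : v.length ≤ s.length := by
      by_contra hlt
      push_neg at hlt
      exact hsv (suffix_of_suffix_le hs (List.suffix_append u v) hlt.le)
    have hvsuf : v <:+ s := suffix_of_suffix_le (List.suffix_append u v) hs hvle
    obtain ⟨s', rfl⟩ := hvsuf
    have hs'u : s' <:+ u := by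
      obtain ⟨w, hw⟩ := hs
      rw [← List.append_assoc] at hw
      exact ⟨w, List.append_cancel_right hw⟩
    have hs'ne : s' ≠ [] := by
      rintro rfl
      exact hsv (by simp)
    have hs'nequ : s' ≠ u := by
      rintro rfl
      exact hneq rfl
    have h1 : List.Lex (· < ·) u s' := hus s' hs'u hs'ne hs'nequ
    have hnp : ¬ u <+: s' := by
      intro hpre
      exact hs'nequ ((hs'u.eq_of_length (le_antisymm hs'u.length_le hpre.length_le)))
    exact lex_append_of_not_prefix h1 hnp v v

/-- Two conjugate Lyndon words are equal. -/
theorem lyndon_unique_rot {w u : List α} (hw : IsLyndon w) (hu : IsLyndon u)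
    (h : w ~r u) : u = w := by
  obtain ⟨k, hk⟩ := h
  have hlen : 0 < w.length := List.length_pos_iff.mpr hw.1
  set k' := k % w.length with hk'def
  have hk' : w.rotate k' = u := by rw [hk'def, List.rotate_mod]; exact hk
  rcases Nat.eq_zero_or_pos k' with h0 | hpos
  · rw [h0, List.rotate_zero] at hk'
    exact hk'.symm
  · exfalso
    have hklt : k' < w.length := Nat.mod_lt _ hlen
    have hd : w.rotate k' = w.drop k' ++ w.take k' :=
      List.rotate_eq_drop_append_take hklt.le
    set x := w.take k' with hxdef
    set y := w.drop k' with hydef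
    have hxy : x ++ y = w := List.take_append_drop k' w
    have hx : x ≠ [] := by
      have : x.length = k' := by rw [hxdef, List.length_take]; omega
      intro h; rw [h] at this; simp at this; omega
    have hy : y ≠ [] := by
      have : y.length = w.length - k' := by rw [hydef, List.length_drop]
      intro h; rw [h] at this; simp at this; omega
    have hu_eq : u = y ++ x := by rw [← hk', hd]
    have l1 : List.Lex (· < ·) w (y ++ x) := lyndon_lex_rot hw hxy hx hy
    have l2 : List.Lex (· < ·) (y ++ x) (x ++ y) := by
      have hu' : IsLyndon (y ++ x) := by rw [← hu_eq]; exact hu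
      exact lyndon_lex_rot hu' rfl hy hx
    rw [hxy] at l2
    exact (asymm l1) l2

theorem isLyndon_iff_tails [DecidableEq α] (w : List α) :
    IsLyndon w ↔ w ≠ [] ∧ ∀ v ∈ w.tails, v ≠ [] → v ≠ w → List.Lex (· < ·) w v := by
  constructor
  · rintro ⟨h1, h2⟩
    exact ⟨h1, fun v hv => h2 v ((List.mem_tails _ _).mp hv)⟩
  · rintro ⟨h1, h2⟩
    exact ⟨h1, fun v hv => h2 v ((List.mem_tails _ _).mpr hv)⟩

end Generic

/-! ### Fibonacci-specific development -/

/-- suffix pair: `[0,1]` at even indices, `[1,0]` at odd ones. -/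
def sgn (m : ℕ) : List (Fin 2) := if Even m then [0, 1] else [1, 0]

/-- swapped suffix pair. -/
def sgn' (m : ℕ) : List (Fin 2) := if Even m then [1, 0] else [0, 1]

lemma sgn_succ (m : ℕ) : sgn (m + 1) = sgn' m := by
  by_cases h : Even m <;> simp [sgn, sgn', Nat.even_add_one, h]

lemma sgn'_succ (m : ℕ) : sgn' (m + 1) = sgn m := by
  by_cases h : Even m <;> simp [sgn, sgn', Nat.even_add_one, h]

lemma sgn_two (m : ℕ) : sgn (m + 2) = sgn m := by
  rw [sgn_succ, sgn'_succ]

/-- the palindromic prefix words -/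
def Qw (t : ℕ → List (Fin 2)) : ℕ → List (Fin 2)
  | 0 => []
  | m + 1 => t (m + 1) ++ Qw t m

/-- the Lyndon words `0 ++ Q ++ 1` -/
def Ww (t : ℕ → List (Fin 2)) (m : ℕ) : List (Fin 2) := (0 : Fin 2) :: (Qw t m ++ [1])

section Fib

variable {t : ℕ → List (Fin 2)} (h0 : t 0 = [1]) (h1 : t 1 = [0])
  (hrec : ∀ k, 1 ≤ k → t (k + 1) = t k ++ t (k - 1))

include hrec in
lemma trec (m : ℕ) : t (m + 2) = t (m + 1) ++ t m := by
  have := hrec (m + 1) (by omega)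
  simpa using this

include h0 h1 hrec in
lemma NC : ∀ m : ℕ, t (m + 1) ++ t m = Qw t m ++ sgn m ∧
    t m ++ t (m + 1) = Qw t m ++ sgn' m
  | 0 => by rw [h0, h1]; simp [Qw, sgn, sgn']
  | (m + 1) => by
      obtain ⟨ih1, ih2⟩ := NC m
      constructor
      · show t (m + 2) ++ t (m + 1) = Qw t (m + 1) ++ sgn (m + 1)
        rw [trec hrec m, List.append_assoc, ih2, sgn_succ]
        simp [Qw, List.append_assoc]
      · show t (m + 1) ++ t (m + 2) = Qw t (m + 1) ++ sgn' (m + 1)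
        rw [trec hrec m, ih1, sgn'_succ]
        simp [Qw, List.append_assoc]

include h0 h1 hrec in
lemma tQ (m : ℕ) : t (m + 2) = Qw t m ++ sgn m := by
  rw [trec hrec m]
  exact (NC h0 h1 hrec m).1

include h0 h1 hrec in
lemma QB : ∀ m : ℕ, Qw t (m + 2) = Qw t (m + 1) ++ (sgn (m + 1) ++ Qw t m)
  | 0 => by
      have ht2 : t 2 = t 1 ++ t 0 := trec hrec 0
      simp [Qw, ht2, h0, h1, sgn]
  | (m + 1) => by
      show Qw t (m + 3) = Qw t (m + 2) ++ (sgn (m + 2) ++ Qw t (m + 1))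
      have e1 : Qw t (m + 3) = t (m + 3) ++ Qw t (m + 2) := rfl
      have hA : Qw t (m + 2) = Qw t m ++ (sgn m ++ Qw t (m + 1)) := by
        have : Qw t (m + 2) = t (m + 2) ++ Qw t (m + 1) := rfl
        rw [this, tQ h0 h1 hrec m]
        simp [List.append_assoc]
      rw [e1, tQ h0 h1 hrec (m + 1)]
      conv_lhs => rw [hA]
      conv_rhs => rw [QB m]
      rw [sgn_two]
      simp [List.append_assoc]

include h0 h1 hrec in
lemma W_cmp : ∀ m : ℕ, (Even m → List.Lex (· < ·) (Ww t (m + 1)) (Ww t m)) ∧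
    (¬ Even m → List.Lex (· < ·) (Ww t m) (Ww t (m + 1)))
  | 0 => by
      constructor
      · intro _
        have hq0 : Qw t 0 = [] := rfl
        have hq1 : Qw t 1 = [0] := by simp [Qw, h1]
        rw [Ww, Ww, hq0, hq1]
        exact List.Lex.cons (List.Lex.rel (by decide))
      · intro h; exact absurd Even.zero h
  | (j + 1) => by
      have hB := QB h0 h1 hrec j
      constructor
      · intro he
        have hj : ¬ Even j := by simpa [Nat.even_add_one] using he
        have hsg : sgn (j + 1) = [0, 1] := by simp [sgn, he]
        show List.Lex (· < ·) (Ww t (j + 2)) (Ww t (j + 1))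
        rw [Ww, Ww, hB, hsg]
        refine List.Lex.cons ?_
        simp only [List.append_assoc, List.cons_append, List.nil_append]
        exact List.Lex.append_left _ (List.Lex.rel (by decide)) _
      · intro he
        have hsg : sgn (j + 1) = [1, 0] := by simp [sgn, he]
        show List.Lex (· < ·) (Ww t (j + 1)) (Ww t (j + 2))
        rw [Ww, Ww, hB, hsg]
        refine List.Lex.cons ?_
        simp only [List.append_assoc, List.cons_append, List.nil_append]
        exact List.Lex.append_left _ (List.Lex.cons List.Lex.nil) _

include h0 h1 hrec in
lemma W_lyndon : ∀ m : ℕ, IsLyndon (Ww t m) ∧ IsLyndon (Ww t (m + 1))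
  | 0 => by
      have hq0 : Qw t 0 = [] := rfl
      have hq1 : Qw t 1 = [0] := by simp [Qw, h1]
      constructor
      · rw [Ww, hq0]
        rw [isLyndon_iff_tails]
        decide
      · rw [Ww, hq1]
        rw [isLyndon_iff_tails]
        decide
  | (m + 1) => by
      obtain ⟨hWm, hWm1⟩ := W_lyndon m
      refine ⟨hWm1, ?_⟩
      by_cases he : Even m
      · -- m even: sgn (m+1) = [1,0], W(m+2) = W(m+1) ++ W m
        have hsg : sgn (m + 1) = [1, 0] := by
          simp [sgn, Nat.even_add_one, he]
        show IsLyndon (Ww t (m + 2))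
        have hid : Ww t (m + 2) = Ww t (m + 1) ++ Ww t m := by
          rw [Ww, Ww, Ww, QB h0 h1 hrec m, hsg]
          simp [List.append_assoc]
        rw [hid]
        exact isLyndon_append hWm1 hWm ((W_cmp h0 h1 hrec m).1 he)
      · -- m odd: sgn m = [1,0], W(m+2) = W m ++ W(m+1)
        have hsg : sgn m = [1, 0] := by simp [sgn, he]
        show IsLyndon (Ww t (m + 2))
        have hA : Qw t (m + 2) = Qw t m ++ (sgn m ++ Qw t (m + 1)) := by
          have : Qw t (m + 2) = t (m + 2) ++ Qw t (m + 1) := rfl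
          rw [this, tQ h0 h1 hrec m]
          simp [List.append_assoc]
        have hid : Ww t (m + 2) = Ww t m ++ Ww t (m + 1) := by
          rw [Ww, Ww, Ww, hA, hsg]
          simp [List.append_assoc]
        rw [hid]
        exact isLyndon_append hWm hWm1 ((W_cmp h0 h1 hrec m).2 he)

include h0 h1 hrec in
lemma W_rot (m : ℕ) : t (m + 2) ~r Ww t m := by
  have h2 : t (m + 2) = Qw t m ++ sgn m := tQ h0 h1 hrec m
  by_cases he : Even m
  · -- sgn m = [0,1]; go through t m ++ t (m+1) = Qw ++ [1,0]
    have hsw : t m ++ t (m + 1) = Qw t m ++ [1, 0] := by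
      have := (NC h0 h1 hrec m).2
      rwa [show sgn' m = [1, 0] by simp [sgn', he]] at this
    have r1 : t (m + 2) ~r t m ++ t (m + 1) := by
      rw [trec hrec m]
      exact List.isRotated_append
    have r2 : t m ++ t (m + 1) ~r Ww t m := by
      rw [hsw, show Qw t m ++ [1, 0] = (Qw t m ++ [1]) ++ [0] by simp,
        show Ww t m = [0] ++ (Qw t m ++ [1]) from rfl]
      exact List.isRotated_append
    exact r1.trans r2
  · have hsg : sgn m = [1, 0] := by simp [sgn, he]
    rw [h2, hsg, show Qw t m ++ [1, 0] = (Qw t m ++ [1]) ++ [0] by simp]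
    rw [show Ww t m = [0] ++ (Qw t m ++ [1]) from rfl]
    exact List.isRotated_append

end Fib

theorem fibonacci_lyndon_rotation (t : ℕ → List (Fin 2))
    (h0 : t 0 = [1]) (h1 : t 1 = [0])
    (hrec : ∀ k, 1 ≤ k → t (k + 1) = t k ++ t (k - 1))
    (n : ℕ) (hn : 1 ≤ n) (p : List (Fin 2)) (hp : p.reverse = p)
    (hpn : t (n + 1) = p ++ (if Odd n then [0, 1] else [1, 0])) :
    IsLyndon ((0 : Fin 2) :: p ++ [1]) ∧
    (∃ i, (t (n + 1)).rotate i = (0 : Fin 2) :: p ++ [1]) ∧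
    (∀ u : List (Fin 2), (∃ i, (t (n + 1)).rotate i = u) → IsLyndon u →
      u = (0 : Fin 2) :: p ++ [1]) := by
  obtain ⟨m, rfl⟩ : ∃ m, n = m + 1 := ⟨n - 1, by omega⟩
  have hsgeq : (if Odd (m + 1) then ([0, 1] : List (Fin 2)) else [1, 0]) = sgn m := by
    by_cases he : Even m
    · rw [if_pos, sgn, if_pos he]
      simpa [Nat.odd_add_one, Nat.not_odd_iff_even] using he
    · rw [if_neg, sgn, if_neg he]
      simpa [Nat.odd_add_one, Nat.not_odd_iff_even] using he
  have hQ : p = Qw t m := by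
    have h2 : t (m + 1 + 1) = Qw t m ++ sgn m := tQ h0 h1 hrec m
    rw [hsgeq] at hpn
    have heq : p ++ sgn m = Qw t m ++ sgn m := by rw [← hpn, h2]
    exact List.append_cancel_right heq
  have hwe : (0 : Fin 2) :: p ++ [1] = Ww t m := by
    rw [hQ, Ww]
    simp
  rw [hwe]
  have hrot : t (m + 1 + 1) ~r Ww t m := W_rot h0 h1 hrec m
  have hlyn : IsLyndon (Ww t m) := (W_lyndon h0 h1 hrec m).1
  refine ⟨hlyn, hrot, ?_⟩
  intro u hu hulyn
  exact lyndon_unique_rot hlyn hulyn (hrot.symm.trans hu)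
end

section
/- Let w be the Christoffel word beginning with the letter a of slope p/q = [0; 1+d_1, d_2, ..., d_n, 1] (continued fraction expansion with d_1 ≥ 0 and d_i ≥ 1 for 2 ≤ i ≤ n), i.e., w is the Lyndon rotation of the standard word s_{n+1} = s_n s_{n−1} where s_{−1} = b, s_0 = a, s_i = s_{i−1}^{d_i} s_{i−2} for 1 ≤ i ≤ n. Then the number of distinct Lyndon factors of w equals d_1 + d_2 + ⋯ + d_n + 3. -/
open scoped Classical

set_option linter.unusedSectionVars false

open List
section
variable {α : Type*} [LinearOrder α]


variable {α : Type*} [LinearOrder α]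

/-- strict domination: the two lists differ at some common position -/
def SD (x y : List α) : Prop :=
  ∃ z c c' x' y', c < c' ∧ x = z ++ c :: x' ∧ y = z ++ c' :: y'

lemma lt_append_right (x : List α) {r : List α} (hr : r ≠ []) : x < x ++ r := by
  induction x with
  | nil => cases r with
    | nil => exact absurd rfl hr
    | cons a l => exact List.Lex.nil
  | cons a l ih => exact List.Lex.cons ih

lemma prefix_le {x y : List α} (h : x <+: y) : x = y ∨ x < y := by
  rcases h with ⟨r, rfl⟩
  rcases eq_or_ne r [] with rfl | hr
  · left; simp
  · right; exact lt_append_right x hr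

lemma append_lt_append_left {x y : List α} (z : List α) (h : x < y) : z ++ x < z ++ y := by
  induction z with
  | nil => exact h
  | cons a l ih => exact List.Lex.cons ih

lemma lt_of_append_lt_append_left {x y : List α} {z : List α} (h : z ++ x < z ++ y) : x < y := by
  induction z with
  | nil => exact h
  | cons a l ih =>
    cases h with
    | cons h' => exact ih h'
    | rel h' => exact absurd h' (lt_irrefl a)

lemma SD.lt_append {x y : List α} (h : SD x y) (m m' : List α) : x ++ m < y ++ m' := by
  obtain ⟨z, c, c', x', y', hcc, rfl, rfl⟩ := h
  have : z ++ (c :: (x' ++ m)) < z ++ (c' :: (y' ++ m')) :=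
    append_lt_append_left z (List.Lex.rel hcc)
  simpa using this

lemma SD.lt {x y : List α} (h : SD x y) : x < y := by
  have := h.lt_append [] []
  simpa using this

lemma lt_cases {x y : List α} (h : x < y) : x <+: y ∨ SD x y := by
  induction h with
  | nil => left; exact List.nil_prefix
  | @rel a l b l' hab => right; exact ⟨[], a, b, l, l', hab, rfl, rfl⟩
  | @cons a l l' h ih =>
    rcases ih with h' | ⟨z, c, c', x', y', hcc, rfl, rfl⟩
    · left; exact ⟨h'.choose, by simp [h'.choose_spec]⟩
    · right; exact ⟨a :: z, c, c', x', y', hcc, rfl, rfl⟩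

lemma sd_of_lt_of_length_le {x y : List α} (h : x < y) (hl : y.length ≤ x.length) : SD x y := by
  rcases lt_cases h with hp | hsd
  · have := List.IsPrefix.eq_of_length hp (le_antisymm hp.length_le hl)
    subst this
    exact absurd h (lt_irrefl x)
  · exact hsd

lemma SD.of_prefix {x y Y : List α} (h : SD x y) (hY : y <+: Y) (m : List α) : x ++ m < Y := by
  obtain ⟨z, c, c', x', y', hcc, rfl, rfl⟩ := h
  obtain ⟨r, rfl⟩ := hY
  have : (z ++ c' :: y') ++ r = z ++ c' :: (y' ++ r) := by simp
  rw [this]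
  exact SD.lt_append ⟨z, c, c', x', y' ++ r, hcc, rfl, rfl⟩ m [] |>.trans_eq (by simp)


lemma lyndon_lt {w v : List α} (h : IsLyndon w) (hs : v <:+ w) (hne : v ≠ []) (hnw : v ≠ w) :
    w < v := h.2 v hs hne hnw

lemma lyndon_singleton (c : α) : IsLyndon [c] := by
  refine ⟨by simp, fun v hs hne hnw => ?_⟩
  exfalso
  rcases hs with ⟨l, hl⟩
  have hv : v.length ≤ 1 := by
    have := congrArg List.length hl; simp at this; omega
  interval_cases h : v.length
  · exact hne (List.length_eq_zero_iff.mp h)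
  · apply hnw
    cases l with
    | nil => simpa using hl
    | cons a l' => exfalso; have := congrArg List.length hl; simp [h] at this

/-- proper suffix of Lyndon word strictly dominates it -/
lemma lyndon_sd {w s : List α} (h : IsLyndon w) (hs : s <:+ w) (hne : s ≠ []) (hnw : s ≠ w) :
    SD w s :=
  sd_of_lt_of_length_le (lyndon_lt h hs hne hnw) hs.length_le

/-- suffix decomposition -/
lemma suffix_append_cases {s x y : List α} (h : s <:+ x ++ y) :
    s <:+ y ∨ ∃ s', s' <:+ x ∧ s' ≠ [] ∧ s = s' ++ y := by
  rcases h with ⟨l, hl⟩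
  by_cases hlen : s.length ≤ y.length
  · left
    exact List.suffix_of_suffix_length_le ⟨l, hl⟩ ⟨x, rfl⟩ hlen
  · right
    push_neg at hlen
    have hlx : l.length ≤ x.length := by
      have := congrArg List.length hl; simp at this; omega
    have hpl : l <+: x :=
      List.prefix_of_prefix_length_le ⟨s, hl⟩ ⟨y, rfl⟩ hlx
    obtain ⟨s', rfl⟩ := hpl
    refine ⟨s', ⟨l, rfl⟩, ?_, ?_⟩
    · rintro rfl
      simp at hl
      subst hl
      simp at hlen
    · have : l ++ s = l ++ (s' ++ y) := by simpa using hl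
      exact List.append_cancel_left this

/-- prefix decomposition -/
lemma prefix_append_cases {p x y : List α} (h : p <+: x ++ y) :
    p <+: x ∨ ∃ q, q <+: y ∧ p = x ++ q := by
  by_cases hlen : p.length ≤ x.length
  · left; exact List.prefix_of_prefix_length_le h ⟨y, rfl⟩ hlen
  · right
    push_neg at hlen
    have hxp : x <+: p := List.prefix_of_prefix_length_le ⟨y, rfl⟩ h (le_of_lt hlen)
    obtain ⟨q, rfl⟩ := hxp
    refine ⟨q, ?_, rfl⟩
    rwa [List.prefix_append_right_inj] at h

/-- infix decomposition -/
lemma infix_append_cases {f x y : List α} (h : f <:+: x ++ y) :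
    f <:+: x ∨ f <:+: y ∨
      ∃ s p, s <:+ x ∧ p <+: y ∧ s ≠ [] ∧ p ≠ [] ∧ f = s ++ p := by
  rcases h with ⟨l, r, hlr⟩
  by_cases h1 : l.length + f.length ≤ x.length
  · left
    have hpf : l ++ f <+: x := by
      apply List.prefix_of_prefix_length_le _ ⟨y, rfl⟩ (by simp; omega)
      exact ⟨r, by simpa [List.append_assoc] using hlr⟩
    rcases hpf with ⟨r', hr'⟩
    exact ⟨l, r', by simpa [List.append_assoc] using hr'⟩
  · by_cases h2 : x.length ≤ l.length
    · right; left
      have hxl : x <+: l := by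
        apply List.prefix_of_prefix_length_le ⟨y, rfl⟩ _ h2
        exact ⟨f ++ r, by simpa [List.append_assoc] using hlr⟩
      obtain ⟨l', rfl⟩ := hxl
      refine ⟨l', r, ?_⟩
      have : x ++ (l' ++ (f ++ r)) = x ++ y := by simpa [List.append_assoc] using hlr
      simpa [List.append_assoc] using List.append_cancel_left this
    · right; right
      push_neg at h1 h2
      have hlx : l <+: x := by
        apply List.prefix_of_prefix_length_le _ ⟨y, rfl⟩ (le_of_lt h2)
        exact ⟨f ++ r, by simpa [List.append_assoc] using hlr⟩
      obtain ⟨s, rfl⟩ := hlx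
      have hs : s ≠ [] := by rintro rfl; simp at h2
      have hfr : f ++ r = s ++ y := by
        have : l ++ (f ++ r) = l ++ (s ++ y) := by simpa [List.append_assoc] using hlr
        exact List.append_cancel_left this
      have hsf : s <+: f := by
        apply List.prefix_of_prefix_length_le ⟨y, hfr.symm⟩ ⟨r, rfl⟩
        simp only [List.length_append] at h1
        omega
      obtain ⟨p, rfl⟩ := hsf
      have hp : p ≠ [] := by
        rintro rfl
        simp only [List.length_append, List.append_nil] at h1
        omega
      refine ⟨s, p, ⟨l, rfl⟩, ?_, hs, hp, rfl⟩
      have : s ++ (p ++ r) = s ++ y := by simpa [List.append_assoc] using hfr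
      exact ⟨r, List.append_cancel_left this⟩

/-- splitting: if p <+: u ++ p and p is long, p = u ++ r with r <+: p -/
lemma prefix_self_append {p u : List α} (h : p <+: u ++ p) (hlen : u.length < p.length) :
    ∃ r, r <+: p ∧ p = u ++ r := by
  have hup : u <+: p := List.prefix_of_prefix_length_le ⟨p, rfl⟩ h (by omega)
  obtain ⟨r, rfl⟩ := hup
  rw [List.prefix_append_right_inj] at h
  exact ⟨r, h, rfl⟩

lemma no_lt_prefix {q X : List α} (h : q <+: X) : ¬ X < q := fun hlt =>
  (prefix_le h).elim (fun e => absurd (e ▸ hlt) (lt_irrefl _))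
    (fun hq => absurd (lt_trans hq hlt) (lt_irrefl _))

lemma cat_lt_right {u v : List α} (hu : IsLyndon u) (hv : IsLyndon v) (huv : u < v) :
    u ++ v < v := by
  rcases lt_cases huv with hp | hsd
  · obtain ⟨v₂, rfl⟩ := hp
    have hv₂ : v₂ ≠ [] := by rintro rfl; simp at huv
    apply append_lt_append_left
    apply lyndon_lt hv ⟨u, rfl⟩ hv₂
    intro he
    have := congrArg List.length he
    simp at this
    exact hu.1 this
  · simpa using hsd.lt_append v []

lemma lyndon_append {u v : List α} (hu : IsLyndon u) (hv : IsLyndon v) (huv : u < v) :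
    IsLyndon (u ++ v) := by
  have hune : u ≠ [] := hu.1
  have key : u ++ v < v := cat_lt_right hu hv huv
  refine ⟨by simp [hune], fun s hs hne hnw => ?_⟩
  rcases suffix_append_cases hs with hsv | ⟨s', hs', hs'ne, rfl⟩
  · rcases eq_or_ne s v with rfl | hsnv
    · exact key
    · exact lt_trans key (lyndon_lt hv hsv hne hsnv)
  · have hs'nu : s' ≠ u := by rintro rfl; exact hnw rfl
    exact (lyndon_sd hu hs' hs'ne hs'nu).lt_append v v

/-- Invariants carried along the Christoffel tree -/
def PairInv (u v : List α) : Prop :=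
  IsLyndon u ∧ IsLyndon v ∧ u < v ∧
  (∀ q, q <+: v → q ≠ [] → q ≠ v → ¬ (u ++ q < q)) ∧
  (∀ s, s <:+ u → s ≠ [] → s ≠ u → v ≤ s)

lemma PairInv.cat {u v : List α} (h : PairInv u v) : IsLyndon (u ++ v) :=
  lyndon_append h.1 h.2.1 h.2.2.1

lemma PairInv.catlt {u v : List α} (h : PairInv u v) : u ++ v < v :=
  cat_lt_right h.1 h.2.1 h.2.2.1

lemma PairInv.stepL {u v : List α} (h : PairInv u v) : PairInv u (u ++ v) := by
  obtain ⟨hu, hv, hlt, hiii, hv3⟩ := h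
  refine ⟨hu, PairInv.cat ⟨hu, hv, hlt, hiii, hv3⟩, lt_append_right u hv.1, ?_, ?_⟩
  · intro q hq hqne hqnuv hbad
    rcases prefix_append_cases hq with hqu | ⟨q₂, hq₂, rfl⟩
    · exact no_lt_prefix (hqu.trans ⟨q, rfl⟩) hbad
    · rcases eq_or_ne q₂ [] with rfl | hq₂ne
      · rw [List.append_nil] at hbad
        exact no_lt_prefix (List.prefix_append u u) hbad
      · have hq₂nv : q₂ ≠ v := by rintro rfl; exact hqnuv rfl
        have : u ++ q₂ < q₂ := by
          apply lt_of_append_lt_append_left (z := u)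
          simpa [List.append_assoc] using hbad
        exact hiii q₂ hq₂ hq₂ne hq₂nv this
  · intro s hs hsne hsnu
    have := (lyndon_sd hu hs hsne hsnu).lt_append v []
    simp only [List.append_nil] at this
    exact le_of_lt this

lemma PairInv.stepR {u v : List α} (h : PairInv u v) : PairInv (u ++ v) v := by
  obtain ⟨hu, hv, hlt, hiii, hv3⟩ := h
  have hp : PairInv u v := ⟨hu, hv, hlt, hiii, hv3⟩
  refine ⟨hp.cat, hv, hp.catlt, ?_, ?_⟩
  · intro q hq hqne hqnv hbad
    -- hbad : (u ++ v) ++ q < q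
    have hq_le : q < u ++ q := by
      rcases lt_trichotomy (u ++ q) q with h1 | h1 | h1
      · exact absurd h1 (hiii q hq hqne hqnv)
      · exfalso
        have := congrArg List.length h1
        simp at this
        exact hu.1 this
      · exact h1
    rcases lt_cases hq_le with hpre | hsd
    · by_cases hlen : q.length ≤ u.length
      · have hqu : q <+: u := List.prefix_of_prefix_length_le hpre ⟨q, rfl⟩ hlen
        exact no_lt_prefix ((hqu.trans (List.prefix_append u v)).trans ⟨q, rfl⟩) hbad
      · push_neg at hlen
        obtain ⟨r, hrq, rfl⟩ := prefix_self_append hpre hlen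
        have hbad2 : v ++ (u ++ r) < r := by
          apply lt_of_append_lt_append_left (z := u)
          simpa [List.append_assoc] using hbad
        have hrv : r <+: v ++ (u ++ r) := (hrq.trans hq).trans (List.prefix_append v (u ++ r))
        exact no_lt_prefix hrv hbad2
    · have hqf : q < (u ++ v) ++ q := by
        have h1 : u ++ q <+: (u ++ v) ++ q := by
          rw [List.append_assoc]
          exact (List.prefix_append_right_inj u).2 (hq.trans (List.prefix_append v q))
        simpa using hsd.of_prefix h1 []
      exact absurd (lt_trans hqf hbad) (lt_irrefl q)
  · intro s hs hsne hsnw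
    rcases suffix_append_cases hs with hsv | ⟨s', hs', hs'ne, rfl⟩
    · rcases eq_or_ne s v with rfl | hsnv
      · exact le_refl _
      · exact le_of_lt (lyndon_lt hv hsv hsne hsnv)
    · have hs'nu : s' ≠ u := by rintro rfl; exact hsnw rfl
      rcases eq_or_lt_of_le (hv3 s' hs' hs'ne hs'nu) with he | hlt'
      · rw [← he]; exact le_of_lt (lt_append_right v hv.1)
      · rcases lt_cases hlt' with hpre | hsd
        · rcases prefix_le (hpre.trans (List.prefix_append s' v)) with he | hl
          · exact le_of_eq he
          · exact le_of_lt hl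
        · exact le_of_lt (by simpa using hsd.of_prefix (List.prefix_append s' v) [])

lemma ne_append_left {x : List α} (hx : x ≠ []) (m : List α) : m ≠ x ++ m := fun he => by
  have := congrArg List.length he
  rw [List.length_append] at this
  exact hx (List.length_eq_zero_iff.mp (by omega))

lemma chain_contra {f p v : List α} (h1 : v ≤ f) (h2 : f < p) (h3 : p ≤ v) : False :=
  absurd (lt_of_le_of_lt h1 (lt_of_lt_of_le h2 h3)) (lt_irrefl v)

lemma stepL_core {u v : List α} (h : PairInv u v) {f : List α}
    (hf : f <:+: u ++ (u ++ v)) (hlyn : IsLyndon f) :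
    f = u ++ (u ++ v) ∨ f <:+: u ++ v := by
  obtain ⟨hu, hv, hlt, hiii, hv3⟩ := h
  rcases infix_append_cases hf with h1 | h1 | ⟨s, p, hs, hp, hsne, hpne, rfl⟩
  · right; exact h1.trans (List.prefix_append u v).isInfix
  · right; exact h1
  · rcases eq_or_ne s u with rfl | hsnu
    · rcases eq_or_ne p (s ++ v) with rfl | hpnuv
      · left; rfl
      · exfalso
        rcases prefix_append_cases hp with hpu | ⟨q, hqv, rfl⟩
        · have h2 : s ++ p < p := lyndon_lt hlyn ⟨s, rfl⟩ hpne (ne_append_left hsne p)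
          exact no_lt_prefix (hpu.trans (List.prefix_append s p)) h2
        · rcases eq_or_ne q [] with rfl | hqne
          · rw [List.append_nil] at *
            have h2 : s ++ s < s := lyndon_lt hlyn ⟨s, rfl⟩ hsne (ne_append_left hsne s)
            exact no_lt_prefix (List.prefix_append s s) h2
          · have hqnv : q ≠ v := by rintro rfl; exact hpnuv rfl
            have h2 : s ++ (s ++ q) < s ++ q :=
              lyndon_lt hlyn ⟨s, rfl⟩ (by simp [hsne]) (ne_append_left hsne _)
            exact hiii q hqv hqne hqnv (lt_of_append_lt_append_left h2)
    · exfalso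
      have hsd : SD u s := lyndon_sd hu hs hsne hsnu
      rcases prefix_append_cases hp with hpu | ⟨q, hqv, rfl⟩
      · have h2 : s ++ p < p := lyndon_lt hlyn ⟨s, rfl⟩ hpne (ne_append_left hsne p)
        have h4 : u < s ++ p := by simpa using hsd.lt_append [] p
        rcases prefix_le hpu with rfl | h5
        · exact absurd (lt_trans h4 h2) (lt_irrefl _)
        · exact absurd (lt_trans (lt_trans h4 h2) h5) (lt_irrefl u)
      · have h2 : s ++ (u ++ q) < u ++ q :=
          lyndon_lt hlyn ⟨s, rfl⟩ (by simp [hu.1]) (ne_append_left hsne _)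
        have h3 : u ++ q < s ++ (u ++ q) := hsd.lt_append q (u ++ q)
        exact absurd (lt_trans h2 h3) (lt_irrefl _)

lemma stepR_core {u v : List α} (h : PairInv u v) {f : List α}
    (hf : f <:+: (u ++ v) ++ v) (hlyn : IsLyndon f) :
    f = (u ++ v) ++ v ∨ f <:+: u ++ v := by
  obtain ⟨hu, hv, hlt, hiii, hv3⟩ := h
  rcases infix_append_cases hf with h1 | h1 | ⟨s, p, hs, hp, hsne, hpne, rfl⟩
  · right; exact h1
  · right; exact h1.trans (List.suffix_append u v).isInfix
  · rcases suffix_append_cases hs with hsv | ⟨s', hs', hs'ne, rfl⟩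
    · exfalso
      have hfp : s ++ p < p := lyndon_lt hlyn ⟨s, rfl⟩ hpne (ne_append_left hsne p)
      have hpv : p ≤ v := (prefix_le hp).elim le_of_eq le_of_lt
      have hvf : v ≤ s ++ p := by
        rcases eq_or_ne s v with rfl | hsnv
        · exact (prefix_le (List.prefix_append s p)).elim le_of_eq le_of_lt
        · exact le_of_lt (by simpa using (lyndon_sd hv hsv hsne hsnv).lt_append [] p)
      exact chain_contra hvf hfp hpv
    · rcases eq_or_ne s' u with rfl | hs'nu
      · rcases eq_or_ne p v with rfl | hpnv
        · left; rfl
        · exfalso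
          have hfp : (s' ++ v) ++ p < p :=
            lyndon_lt hlyn ⟨s' ++ v, rfl⟩ hpne (ne_append_left (by simp [hs'ne]) p)
          have hq_le : p < s' ++ p := by
            rcases lt_trichotomy (s' ++ p) p with h1 | h1 | h1
            · exact absurd h1 (hiii p hp hpne hpnv)
            · exfalso
              have := congrArg List.length h1
              rw [List.length_append] at this
              exact hs'ne (List.length_eq_zero_iff.mp (by omega))
            · exact h1
          rcases lt_cases hq_le with hpre | hsd
          · by_cases hlen : p.length ≤ s'.length
            · have hpu : p <+: s' := List.prefix_of_prefix_length_le hpre ⟨p, rfl⟩ hlen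
              have : p <+: (s' ++ v) ++ p :=
                (hpu.trans (List.prefix_append s' v)).trans (List.prefix_append (s' ++ v) p)
              exact no_lt_prefix this hfp
            · push_neg at hlen
              obtain ⟨r, hrp, rfl⟩ := prefix_self_append hpre hlen
              have h2 : v ++ (s' ++ r) < r := by
                apply lt_of_append_lt_append_left (z := s')
                simpa [List.append_assoc] using hfp
              have hrv : r <+: v := hrp.trans hp
              exact no_lt_prefix (hrv.trans (List.prefix_append v (s' ++ r))) h2
          · have h1 : s' ++ p <+: (s' ++ v) ++ p := by
              rw [List.append_assoc]
              exact (List.prefix_append_right_inj s').2 (hp.trans (List.prefix_append v p))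
            have := hsd.of_prefix h1 []
            exact absurd (lt_trans (by simpa using this) hfp) (lt_irrefl p)
      · exfalso
        have hassoc : (s' ++ v) ++ p = s' ++ (v ++ p) := List.append_assoc s' v p
        have hfp : (s' ++ v) ++ p < p :=
          lyndon_lt hlyn ⟨s' ++ v, rfl⟩ hpne (ne_append_left (by simp [hs'ne]) p)
        have hpv : p ≤ v := (prefix_le hp).elim le_of_eq le_of_lt
        rcases eq_or_lt_of_le (hv3 s' hs' hs'ne hs'nu) with he | hvs
        · refine chain_contra ?_ hfp hpv
          rw [← he]
          exact (prefix_le ((List.prefix_append v v).trans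
            (List.prefix_append (v ++ v) p))).elim le_of_eq le_of_lt
        · rcases lt_cases hvs with hpre | hsd
          · refine chain_contra ?_ hfp hpv
            exact (prefix_le ((hpre.trans (List.prefix_append s' v)).trans
              (List.prefix_append (s' ++ v) p))).elim le_of_eq le_of_lt
          · have h3 : v ++ p < s' ++ (v ++ p) := hsd.lt_append p (v ++ p)
            have h4 : s' ++ (v ++ p) < v ++ p := by
              rw [← hassoc]
              exact lyndon_lt hlyn ⟨s', hassoc.symm⟩ (by simp [hv.1])
                (by rw [hassoc]; exact ne_append_left hs'ne _)
            exact absurd (lt_trans h3 h4) (lt_irrefl _)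

def Lset (w : List α) : Set (List α) := {x | x <:+: w ∧ IsLyndon x}

lemma Lset_finite (w : List α) : (Lset w).Finite :=
  Set.Finite.subset (List.finite_toSet w.sublists)
    (fun x hx => by simpa using List.mem_sublists.2 hx.1.sublist)

lemma not_mem_Lset_of_long {w c : List α} (h : w.length < c.length) : c ∉ Lset w :=
  fun hc => absurd hc.1.length_le (by omega)

lemma Lset_stepL {u v : List α} (h : PairInv u v) :
    Lset (u ++ (u ++ v)) = insert (u ++ (u ++ v)) (Lset (u ++ v)) := by
  ext x
  constructor
  · rintro ⟨hinf, hlyn⟩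
    rcases stepL_core h hinf hlyn with rfl | h'
    · exact Set.mem_insert _ _
    · exact Set.mem_insert_iff.2 (Or.inr ⟨h', hlyn⟩)
  · rintro (rfl | ⟨hinf, hlyn⟩)
    · exact ⟨List.infix_refl _, h.stepL.cat⟩
    · exact ⟨hinf.trans (List.suffix_append u (u ++ v)).isInfix, hlyn⟩

lemma Lset_stepR {u v : List α} (h : PairInv u v) :
    Lset ((u ++ v) ++ v) = insert ((u ++ v) ++ v) (Lset (u ++ v)) := by
  ext x
  constructor
  · rintro ⟨hinf, hlyn⟩
    rcases stepR_core h hinf hlyn with rfl | h'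
    · exact Set.mem_insert _ _
    · exact Set.mem_insert_iff.2 (Or.inr ⟨h', hlyn⟩)
  · rintro (rfl | ⟨hinf, hlyn⟩)
    · exact ⟨List.infix_refl _, h.stepR.cat⟩
    · exact ⟨hinf.trans (List.prefix_append (u ++ v) v).isInfix, hlyn⟩

lemma Lset_stepL_ncard {u v : List α} (h : PairInv u v) {N : ℕ}
    (hN : (Lset (u ++ v)).ncard = N) : (Lset (u ++ (u ++ v))).ncard = N + 1 := by
  rw [Lset_stepL h, Set.ncard_insert_of_notMem
    (not_mem_Lset_of_long (by simp [List.length_pos_iff.2 h.1.1])) (Lset_finite _), hN]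

lemma Lset_stepR_ncard {u v : List α} (h : PairInv u v) {N : ℕ}
    (hN : (Lset (u ++ v)).ncard = N) : (Lset ((u ++ v) ++ v)).ncard = N + 1 := by
  rw [Lset_stepR h, Set.ncard_insert_of_notMem
    (not_mem_Lset_of_long (by simp [List.length_pos_iff.2 h.2.1.1])) (Lset_finite _), hN]

lemma lyndon_rot_le {x y : List α} (hx : IsLyndon x) (h : x ~r y) : x ≤ y := by
  obtain ⟨m, hm⟩ := h
  have hxne : x ≠ [] := hx.1
  have hlen : 0 < x.length := List.length_pos_iff.2 hxne
  have hmod : x.rotate (m % x.length) = y := by rw [List.rotate_mod]; exact hm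
  have hle : m % x.length ≤ x.length := le_of_lt (Nat.mod_lt _ hlen)
  rw [List.rotate_eq_drop_append_take hle] at hmod
  rcases Nat.eq_zero_or_pos (m % x.length) with h0 | hpos
  · rw [h0] at hmod; simp at hmod; exact le_of_eq hmod
  · set k := m % x.length with hk
    have hkx : k < x.length := Nat.mod_lt _ hlen
    have htne : x.take k ≠ [] := by
      intro he; have := congrArg List.length he
      simp only [List.length_take, List.length_nil] at this
      omega
    have hsne : x.drop k ≠ [] := by
      intro he; have := congrArg List.length he
      simp only [List.length_drop, List.length_nil] at this
      omega
    have hsnx : x.drop k ≠ x := by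
      intro he; have := congrArg List.length he
      rw [List.length_drop] at this; omega
    have hsd : SD x (x.drop k) := lyndon_sd hx (List.drop_suffix k x) hsne hsnx
    have : x < x.drop k ++ x.take k := hsd.lt_append [] (x.take k) |>.trans_eq rfl
      |> fun hh => by simpa using hh
    exact le_of_lt (hmod ▸ this)

lemma lyndon_unique_rot_s19 {x y : List α} (hx : IsLyndon x) (hy : IsLyndon y)
    (h : x ~r y) : x = y :=
  le_antisymm (lyndon_rot_le hx h) (lyndon_rot_le hy h.symm)

end

lemma listPow_zero {α : Type*} (x : List α) : listPow x 0 = [] := rfl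

lemma listPow_succ {α : Type*} (x : List α) (k : ℕ) :
    listPow x (k+1) = x ++ listPow x k := by
  simp [listPow, List.replicate_succ]

lemma listPow_succ' {α : Type*} (x : List α) (k : ℕ) :
    listPow x (k+1) = listPow x k ++ x := by
  simp [listPow, List.replicate_succ']

lemma listPow_comm {α : Type*} (x : List α) (k : ℕ) :
    x ++ listPow x k = listPow x k ++ x := by
  induction k with
  | zero => simp [listPow_zero]
  | succ m ih =>
    calc x ++ listPow x (m+1) = x ++ (listPow x m ++ x) := by rw [listPow_succ']
      _ = (x ++ listPow x m) ++ x := by rw [List.append_assoc]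
      _ = listPow x (m+1) ++ x := by rw [ih, ← listPow_succ']

section base
open List

lemma prefix_single {α : Type*} {q : List α} {c : α} (h : q <+: [c]) : q = [] ∨ q = [c] := by
  rcases h with ⟨r, hr⟩
  cases q with
  | nil => exact Or.inl rfl
  | cons a q' =>
    right
    simp only [List.cons_append, List.cons.injEq] at hr
    obtain ⟨rfl, hr2⟩ := hr
    have : q' = [] := by
      have := congrArg List.length hr2; simp at this; exact this.1
    rw [this]

lemma suffix_single {α : Type*} {q : List α} {c : α} (h : q <:+ [c]) : q = [] ∨ q = [c] := by
  rcases h with ⟨l, hl⟩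
  cases q with
  | nil => exact Or.inl rfl
  | cons a q' =>
    right
    have hlen := congrArg List.length hl
    simp only [List.length_append, List.length_cons, List.length_nil] at hlen
    have hl0 : l = [] := List.length_eq_zero_iff.mp (by omega)
    have hq0 : q' = [] := List.length_eq_zero_iff.mp (by omega)
    subst hl0; subst hq0
    simpa using hl

lemma base_pairInv : PairInv ([0] : List (Fin 2)) [1] := by
  refine ⟨lyndon_singleton 0, lyndon_singleton 1, List.Lex.rel (by decide), ?_, ?_⟩
  · intro q hq hne hnv
    rcases prefix_single hq with rfl | rfl
    · exact absurd rfl hne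
    · exact absurd rfl hnv
  · intro s hs hne hnu
    rcases suffix_single hs with rfl | rfl
    · exact absurd rfl hne
    · exact absurd rfl hnu

lemma Lset_base : Lset ([0, 1] : List (Fin 2)) = {[0], [1], [0, 1]} := by
  ext x
  constructor
  · rintro ⟨hinf, hlyn⟩
    have hsub : x ∈ ([0,1] : List (Fin 2)).sublists := List.mem_sublists.2 hinf.sublist
    have hev : ([0,1] : List (Fin 2)).sublists = [[], [0], [1], [0, 1]] := by decide
    rw [hev] at hsub
    simp only [List.mem_cons, List.not_mem_nil, or_false] at hsub
    rcases hsub with rfl | rfl | rfl | rfl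
    · exact absurd rfl hlyn.1
    · simp
    · simp
    · simp
  · intro hx
    simp only [Set.mem_insert_iff, Set.mem_singleton_iff] at hx
    rcases hx with rfl | rfl | rfl
    · exact ⟨⟨[], [1], rfl⟩, lyndon_singleton 0⟩
    · exact ⟨⟨[0], [], rfl⟩, lyndon_singleton 1⟩
    · exact ⟨List.infix_refl _, base_pairInv.cat⟩

lemma Lset_base_ncard : (Lset ([0, 1] : List (Fin 2))).ncard = 3 := by
  rw [Lset_base]
  rw [Set.ncard_insert_of_notMem (by decide), Set.ncard_insert_of_notMem (by decide),
    Set.ncard_singleton]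

end base

section assembly
open List Finset

lemma innerL (T u : List (Fin 2)) (hu : u ++ [0] = [0] ++ T) :
    ∀ (j : ℕ) (v Z : List (Fin 2)) (N : ℕ), PairInv u v → u ++ v = [0] ++ Z →
      (Lset (u ++ v)).ncard = N →
      ∃ v', PairInv u v' ∧ u ++ v' = [0] ++ (listPow T j ++ Z) ∧
        (Lset (u ++ v')).ncard = N + j := by
  intro j
  induction j with
  | zero =>
    intro v Z N h1 h2 h3
    exact ⟨v, h1, by simpa [listPow_zero] using h2, by simpa using h3⟩
  | succ k ih =>
    intro v Z N h1 h2 h3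
    obtain ⟨v', hp, hw, hc⟩ := ih v Z N h1 h2 h3
    refine ⟨u ++ v', hp.stepL, ?_, ?_⟩
    · rw [hw, ← List.append_assoc u [0], hu, listPow_succ]
      simp [List.append_assoc]
    · rw [Lset_stepL_ncard hp hc]
      omega

lemma innerR (T v Z : List (Fin 2)) (hv : Z ++ v = T ++ Z) :
    ∀ (j : ℕ) (u : List (Fin 2)) (N : ℕ), PairInv u v → u ++ v = [0] ++ Z →
      (Lset (u ++ v)).ncard = N →
      ∃ u', PairInv u' v ∧ u' ++ v = [0] ++ (listPow T j ++ Z) ∧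
        (Lset (u' ++ v)).ncard = N + j := by
  intro j
  induction j with
  | zero =>
    intro u N h1 h2 h3
    exact ⟨u, h1, by simpa [listPow_zero] using h2, by simpa using h3⟩
  | succ k ih =>
    intro u N h1 h2 h3
    obtain ⟨u', hp, hw, hc⟩ := ih u N h1 h2 h3
    refine ⟨u' ++ v, hp.stepR, ?_, ?_⟩
    · rw [← List.append_assoc, hw, List.append_assoc, List.append_assoc, hv, listPow_succ']
      simp [List.append_assoc]
    · rw [Lset_stepR_ncard hp hc]
      omega

end assembly

section build
open List Finset

lemma sum_split (n : ℕ) (hn : 1 ≤ n) (d : ℕ → ℕ) :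
    ∑ i ∈ Finset.Icc 1 n, d i = (∑ i ∈ Finset.Icc 1 (n-1), d i) + d n := by
  have h : n - 1 + 1 = n := by omega
  rw [← h, Finset.sum_Icc_succ_top (by omega)]
  rw [Nat.add_sub_cancel]

lemma build (n : ℕ) (d : ℕ → ℕ) (hd : ∀ i, 2 ≤ i → i ≤ n → 1 ≤ d i)
    (t : ℕ → List (Fin 2)) (h0 : t 0 = [1]) (h1 : t 1 = [0])
    (hrec : ∀ k, 1 ≤ k → k ≤ n → t (k + 1) = listPow (t k) (d k) ++ t (k - 1)) :
    ∀ k, 1 ≤ k → k ≤ n →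
      ∃ u v z, PairInv u v ∧ u ++ v = [0] ++ (z ++ [1]) ∧
        (Lset (u ++ v)).ncard = 3 + (∑ i ∈ Finset.Icc 1 (k-1), d i) ∧
        ((Odd k ∧ t k ++ t (k-1) = z ++ [0,1] ∧ t (k-1) ++ t k = z ++ [1,0] ∧
           u ++ [0] = [0] ++ t k) ∨
         (Even k ∧ t k ++ t (k-1) = z ++ [1,0] ∧ t (k-1) ++ t k = z ++ [0,1] ∧
           (z ++ [1]) ++ v = t k ++ (z ++ [1]))) := by
  intro k hk1
  induction k, hk1 using Nat.le_induction with
  | base =>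
    intro _
    refine ⟨[0], [1], [], base_pairInv, by simp, ?_, Or.inl ⟨⟨0, by ring⟩, ?_, ?_, ?_⟩⟩
    · have : Finset.Icc 1 0 = (∅ : Finset ℕ) := by decide
      rw [show (1:ℕ) - 1 = 0 from rfl, this, Finset.sum_empty]
      exact Lset_base_ncard
    · simp [h0, h1]
    · simp [h0, h1]
    · simp [h1]
  | succ k hk ih =>
    intro hkn
    have hkn' : k ≤ n := by omega
    obtain ⟨u, v, z, hP, hW, hC, hdisj⟩ := ih hkn'
    have hksub : k + 1 - 1 = k := by omega
    have hsum : (∑ i ∈ Finset.Icc 1 (k + 1 - 1), d i) = (∑ i ∈ Finset.Icc 1 (k-1), d i) + d k := by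
      rw [hksub]; exact sum_split k hk d
    rcases hdisj with ⟨hodd, hE1, hE2, hu⟩ | ⟨heven, hE1, hE2, hv⟩
    · -- odd level k : left steps
      obtain ⟨V, hP', hW', hC'⟩ := innerL (t k) u hu (d k) v (z ++ [1]) _ hP hW hC
      have hgg : ∃ gg, u = 0 :: gg ∧ t k = gg ++ [0] := by
        cases u with
        | nil => exact absurd rfl hP.1.1
        | cons c gg =>
          have : c :: (gg ++ [0]) = 0 :: t k := by simpa using hu
          rw [List.cons.injEq] at this
          exact ⟨gg, by rw [this.1], this.2.symm⟩
      obtain ⟨gg, hu0, htk⟩ := hgg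
      have hggV : gg ++ V = listPow (t k) (d k) ++ (z ++ [1]) := by
        have := hW'
        rw [hu0] at this
        simpa using this
      have aux1 : t (k-1) ++ gg = z ++ [1] := by
        have h2 : (t (k-1) ++ gg) ++ [0] = (z ++ [1]) ++ [0] := by
          rw [List.append_assoc, ← htk, hE2]; simp
        exact List.append_cancel_right h2
      refine ⟨u, V, listPow (t k) (d k) ++ z, hP', ?_, ?_, Or.inr ⟨hodd.add_one, ?_, ?_, ?_⟩⟩
      · rw [hW']; simp [List.append_assoc]
      · rw [hC', hsum]; omega
      · rw [hksub, hrec k hk hkn']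
        simp only [List.append_assoc]
        rw [hE2]
      · rw [hksub, hrec k hk hkn']
        rw [← List.append_assoc, listPow_comm]
        simp only [List.append_assoc]
        rw [hE1]
      · rw [hrec k hk hkn']
        have key : t (k-1) ++ (listPow (t k) (d k) ++ (z ++ [1])) = z ++ ([1] ++ V) := by
          calc t (k-1) ++ (listPow (t k) (d k) ++ (z ++ [1]))
              = t (k-1) ++ (gg ++ V) := by rw [hggV]
            _ = (t (k-1) ++ gg) ++ V := (List.append_assoc _ _ _).symm
            _ = (z ++ [1]) ++ V := by rw [aux1]
            _ = z ++ ([1] ++ V) := List.append_assoc _ _ _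
        simp only [List.append_assoc]
        rw [← key]
    · -- even level k : right steps
      have hk2 : 2 ≤ k := by
        obtain ⟨m, hm⟩ := heven; omega
      have hdk : 1 ≤ d k := hd k hk2 hkn'
      obtain ⟨U, hP', hW', hC'⟩ := innerR (t k) v (z ++ [1]) hv (d k) u _ hP hW hC
      have hvsplit : listPow (t k) (d k) ++ (z ++ [1])
          = listPow (t k) (d k - 1) ++ ((z ++ [1]) ++ v) := by
        conv_lhs => rw [show d k = (d k - 1) + 1 by omega, listPow_succ']
        rw [hv]
        simp [List.append_assoc]
      have hU : U = [0] ++ (listPow (t k) (d k - 1) ++ (z ++ [1])) := by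
        apply List.append_cancel_right (bs := v)
        rw [hW', hvsplit]
        simp [List.append_assoc]
      refine ⟨U, v, listPow (t k) (d k) ++ z, hP', ?_, ?_, Or.inl ⟨heven.add_one, ?_, ?_, ?_⟩⟩
      · rw [hW']; simp [List.append_assoc]
      · rw [hC', hsum]; omega
      · rw [hksub, hrec k hk hkn']
        simp only [List.append_assoc]
        rw [hE2]
      · rw [hksub, hrec k hk hkn']
        rw [← List.append_assoc, listPow_comm]
        simp only [List.append_assoc]
        rw [hE1]
      · rw [hU, hrec k hk hkn']
        simp only [List.append_assoc, List.cons_append, List.nil_append, List.singleton_append]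
        congr 1
        rw [← hE1, ← List.append_assoc, ← listPow_succ', show d k - 1 + 1 = d k by omega]
end build

theorem christoffel_lyndon_factor_count_aux (n : ℕ) (hn : 1 ≤ n)
    (d : ℕ → ℕ) (hd : ∀ i, 2 ≤ i → i ≤ n → 1 ≤ d i)
    (t : ℕ → List (Fin 2)) (h0 : t 0 = [1]) (h1 : t 1 = [0])
    (hrec : ∀ k, 1 ≤ k → k ≤ n → t (k + 1) = listPow (t k) (d k) ++ t (k - 1))
    (w : List (Fin 2)) (hw : ∃ i, (t (n + 1) ++ t n).rotate i = w)
    (hLyn : IsLyndon w) :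
    {v : List (Fin 2) | v <:+: w ∧ IsLyndon v}.ncard =
      (∑ i ∈ Finset.Icc 1 n, d i) + 3 := by
  obtain ⟨u, v, z, hP, hW, hC, hdisj⟩ := build n d hd t h0 h1 hrec n hn le_rfl
  have hsplit := sum_split n hn d
  obtain ⟨i, hi⟩ := hw
  have hTw : (t (n+1) ++ t n) ~r w := ⟨i, hi⟩
  rcases hdisj with ⟨hodd, hE1, hE2, hu⟩ | ⟨heven, hE1, hE2, hv⟩
  · obtain ⟨V, hP', hW', hC'⟩ := innerL (t n) u hu (d n) v (z ++ [1]) _ hP hW hC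
    have hcL : IsLyndon (u ++ V) := hP'.cat
    have hT : t (n+1) ++ t n = listPow (t n) (d n) ++ (z ++ [1, 0]) := by
      rw [hrec n hn le_rfl]
      simp only [List.append_assoc]
      rw [hE2]
    have hcons : u ++ V = (0 : Fin 2) :: (listPow (t n) (d n) ++ (z ++ [1])) := by
      rw [hW']; rfl
    have hrot : (u ++ V).rotate 1 = t (n+1) ++ t n := by
      rw [hcons, List.rotate_cons_succ, List.rotate_zero, hT]
      simp [List.append_assoc]
    have hcw : u ++ V = w := lyndon_unique_rot_s19 hcL hLyn ((show (u ++ V) ~r (t (n+1) ++ t n) from ⟨1, hrot⟩).trans hTw)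
    show (Lset w).ncard = _
    rw [← hcw, hC']
    omega
  · obtain ⟨U, hP', hW', hC'⟩ := innerR (t n) v (z ++ [1]) hv (d n) u _ hP hW hC
    have hcL : IsLyndon (U ++ v) := hP'.cat
    have hT : t n ++ t (n+1) = listPow (t n) (d n) ++ (z ++ [1, 0]) := by
      rw [hrec n hn le_rfl, ← List.append_assoc, listPow_comm]
      simp only [List.append_assoc]
      rw [hE1]
    have hcons : U ++ v = (0 : Fin 2) :: (listPow (t n) (d n) ++ (z ++ [1])) := by
      rw [hW']; rfl
    have hrot : (U ++ v).rotate 1 = t n ++ t (n+1) := by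
      rw [hcons, List.rotate_cons_succ, List.rotate_zero, hT]
      simp [List.append_assoc]
    have hcw : U ++ v = w :=
      lyndon_unique_rot_s19 hcL hLyn
        (((show (U ++ v) ~r (t n ++ t (n+1)) from ⟨1, hrot⟩).trans
          (List.isRotated_append)).trans hTw)
    show (Lset w).ncard = _
    rw [← hcw, hC']
    omega

theorem christoffel_lyndon_factor_count (n : ℕ) (hn : 1 ≤ n)
    (d : ℕ → ℕ) (hd : ∀ i, 2 ≤ i → i ≤ n → 1 ≤ d i)
    (t : ℕ → List (Fin 2)) (h0 : t 0 = [1]) (h1 : t 1 = [0])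
    (hrec : ∀ k, 1 ≤ k → k ≤ n → t (k + 1) = listPow (t k) (d k) ++ t (k - 1))
    (w : List (Fin 2)) (hw : ∃ i, (t (n + 1) ++ t n).rotate i = w)
    (hLyn : IsLyndon w) :
    {v : List (Fin 2) | v <:+: w ∧ IsLyndon v}.ncard =
      (∑ i ∈ Finset.Icc 1 n, d i) + 3 :=
  christoffel_lyndon_factor_count_aux n hn d hd t h0 h1 hrec w hw hLyn
end
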